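/- arXiv:1903.02160 — 6 statements merged into one kernel-verified Lean document; each statement's English description precedes it below -/
import Mathlib

section
/- Let n ≥ 2, let 0 < r < 1 and z = √(1 − r²) (so z ≠ 0). Then there exist a positive real number Ω₊ and a negative real number Ω₋ such that for Ω = Ω₊ and for Ω = Ω₋ the curves q_i(t) = (r cos(Ωt + 2π(i−1)/n), r sin(Ωt + 2π(i−1)/n), z), i = 1,…,n, form a solution of the curved n-body equations on S²; i.e., the regular polygon of n equal masses at constant height z ≠ 0 admits relative equilibrium solutions with both a positive and a negative angular velocity. -/
open Real

noncomputable section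

/-- Euclidean inner product on `ℝ³ = ℝ × ℝ × ℝ`. -/
def dot3 (a b : ℝ × ℝ × ℝ) : ℝ := a.1 * b.1 + a.2.1 * b.2.1 + a.2.2 * b.2.2

/-- The curved `n`-body problem on the unit sphere `S² ⊂ ℝ³` (curvature `+1`), equal
masses `mᵢ = 1`:  the curves stay on the sphere and satisfy
`q̈ᵢ = Σ_{j≠i} (qⱼ − (qᵢ·qⱼ) qᵢ)/(1 − (qᵢ·qⱼ)²)^{3/2} − (q̇ᵢ·q̇ᵢ) qᵢ`. -/
def IsSphereSolution (n : ℕ) (q : Fin n → ℝ → ℝ × ℝ × ℝ) : Prop :=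
  (∀ i t, dot3 (q i t) (q i t) = 1) ∧
  ∀ i t, deriv (deriv (q i)) t =
    (∑ j ∈ Finset.univ.erase i,
      (1 / (1 - dot3 (q i t) (q j t) ^ 2) ^ ((3 : ℝ) / 2)) •
        (q j t - dot3 (q i t) (q j t) • q i t))
    - dot3 (deriv (q i) t) (deriv (q i) t) • q i t

/-- The regular `n`-gon configuration rotating with angular velocity `Ω` on the circle of
radius `r` at height `z = √(1 − r²)` on the unit sphere (bodies indexed by
`i = 0,…,n−1`, corresponding to `i = 1,…,n` in the paper). -/
def polygonS (n : ℕ) (r Ω : ℝ) (i : Fin n) (t : ℝ) : ℝ × ℝ × ℝ :=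
  (r * Real.cos (Ω * t + 2 * π * ((i : ℕ) : ℝ) / n),
   r * Real.sin (Ω * t + 2 * π * ((i : ℕ) : ℝ) / n),
   Real.sqrt (1 - r ^ 2))

/-! ### Auxiliary definitions -/

/-- `dfun r x` is the mutual inner product of two polygon bodies whose angular
difference has cosine `x`. -/
def dfun (r x : ℝ) : ℝ := r ^ 2 * x + (1 - r ^ 2)

/-- The interaction coefficient. -/
def Afun (r x : ℝ) : ℝ := 1 / (1 - dfun r x ^ 2) ^ ((3 : ℝ) / 2)

/-- The square of the angular velocity. -/
def Cval (n : ℕ) [NeZero n] (r : ℝ) : ℝ :=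
  ∑ k ∈ Finset.univ.erase (0 : Fin n),
    Afun r (Real.cos (2 * π * ((k : ℕ) : ℝ) / n)) *
      (1 - Real.cos (2 * π * ((k : ℕ) : ℝ) / n))

/-! ### Trigonometric helpers -/

lemma cos_lt_one_of_pos_of_lt (x : ℝ) (h0 : 0 < x) (h2 : x < 2 * π) : Real.cos x < 1 := by
  rcases lt_or_eq_of_le (Real.cos_le_one x) with h | h
  · exact h
  · exfalso
    obtain ⟨m, hm⟩ := (Real.cos_eq_one_iff x).1 h
    have hpi : (0 : ℝ) < 2 * π := by positivity
    have hm0 : (0 : ℝ) < m := by nlinarith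
    have hm1 : (m : ℝ) < 1 := by nlinarith
    have h1 : (0 : ℤ) < m := by exact_mod_cast hm0
    have h2' : m < 1 := by exact_mod_cast hm1
    omega

lemma fin_sub_int (n : ℕ) [NeZero n] (i j : Fin n) :
    ∃ m : ℤ, ((((j - i : Fin n) : ℕ)) : ℤ) = (j : ℕ) - (i : ℕ) + n * m := by
  have h1 : ((j - i : Fin n) : ℕ) = (n - (i : ℕ) + (j : ℕ)) % n := by
    rw [Fin.sub_def]
  set a := n - (i : ℕ) + (j : ℕ) with ha
  refine ⟨1 - (a / n : ℕ), ?_⟩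
  have h2 := Nat.mod_add_div a n
  have hi : (i : ℕ) ≤ n := le_of_lt i.isLt
  have h3 : (a : ℤ) = n - (i : ℕ) + (j : ℕ) := by
    push_cast [ha, Nat.cast_sub hi]; ring
  have h4 : ((a % n : ℕ) : ℤ) = (a : ℤ) - (n : ℤ) * ((a / n : ℕ) : ℤ) := by omega
  rw [h1, h4, h3]
  push_cast
  ring

lemma angle_shift (n : ℕ) [NeZero n] (i j : Fin n) :
    ∃ m : ℤ, 2 * π * ((((j - i : Fin n) : ℕ)) : ℝ) / n
      = -(2 * π * ((i : ℕ) : ℝ) / n - 2 * π * ((j : ℕ) : ℝ) / n) + m * (2 * π) := by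
  obtain ⟨m, hm⟩ := fin_sub_int n i j
  refine ⟨m, ?_⟩
  have hn : (n : ℝ) ≠ 0 := Nat.cast_ne_zero.2 (NeZero.ne n)
  have hm' : ((((j - i : Fin n) : ℕ)) : ℝ) = (j : ℕ) - (i : ℕ) + n * m := by
    exact_mod_cast congrArg (fun x : ℤ => (x : ℝ)) hm
  rw [hm']
  field_simp
  ring

lemma cos_shift (n : ℕ) [NeZero n] (i j : Fin n) :
    Real.cos (2 * π * ((i : ℕ) : ℝ) / n - 2 * π * ((j : ℕ) : ℝ) / n)
      = Real.cos (2 * π * ((((j - i : Fin n) : ℕ)) : ℝ) / n) := by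
  obtain ⟨m, hm⟩ := angle_shift n i j
  rw [hm, Real.cos_add_int_mul_two_pi, Real.cos_neg]

lemma sin_shift (n : ℕ) [NeZero n] (i j : Fin n) :
    Real.sin (2 * π * ((i : ℕ) : ℝ) / n - 2 * π * ((j : ℕ) : ℝ) / n)
      = -Real.sin (2 * π * ((((j - i : Fin n) : ℕ)) : ℝ) / n) := by
  obtain ⟨m, hm⟩ := angle_shift n i j
  rw [hm, Real.sin_add_int_mul_two_pi, Real.sin_neg, neg_neg]

/-! ### Inner products of the configuration -/

lemma dot3_polygon (n : ℕ) (r Ω : ℝ) (hr : r ^ 2 ≤ 1) (i j : Fin n) (t : ℝ) :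
    dot3 (polygonS n r Ω i t) (polygonS n r Ω j t)
      = dfun r (Real.cos (2 * π * ((i : ℕ) : ℝ) / n - 2 * π * ((j : ℕ) : ℝ) / n)) := by
  have hz : Real.sqrt (1 - r ^ 2) * Real.sqrt (1 - r ^ 2) = 1 - r ^ 2 :=
    Real.mul_self_sqrt (by linarith)
  have hc := Real.cos_sub (Ω * t + 2 * π * ((i : ℕ) : ℝ) / n)
    (Ω * t + 2 * π * ((j : ℕ) : ℝ) / n)
  have harg : (Ω * t + 2 * π * ((i : ℕ) : ℝ) / n) - (Ω * t + 2 * π * ((j : ℕ) : ℝ) / n)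
      = 2 * π * ((i : ℕ) : ℝ) / n - 2 * π * ((j : ℕ) : ℝ) / n := by ring
  rw [harg] at hc
  simp only [dot3, polygonS, dfun]
  rw [hz, hc]
  ring

lemma dot3_polygon_self (n : ℕ) (r Ω : ℝ) (hr : r ^ 2 ≤ 1) (i : Fin n) (t : ℝ) :
    dot3 (polygonS n r Ω i t) (polygonS n r Ω i t) = 1 := by
  rw [dot3_polygon n r Ω hr i i t, sub_self, Real.cos_zero, dfun]
  ring

/-! ### Positivity -/

lemma dfun_sq_lt_one (r : ℝ) (hr0 : 0 < r) (hr1 : r < 1) {c : ℝ} (hc1 : -1 ≤ c)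
    (hc : c < 1) : dfun r c ^ 2 < 1 := by
  have h1 : dfun r c < 1 := by
    simp only [dfun]; nlinarith [pow_pos hr0 2]
  have h2 : -1 < dfun r c := by simp only [dfun]; nlinarith
  nlinarith

lemma Afun_pos (r : ℝ) (hr0 : 0 < r) (hr1 : r < 1) {c : ℝ} (hc1 : -1 ≤ c) (hc : c < 1) :
    0 < Afun r c := by
  have h := dfun_sq_lt_one r hr0 hr1 hc1 hc
  have : (0 : ℝ) < (1 - dfun r c ^ 2) ^ ((3 : ℝ) / 2) :=
    Real.rpow_pos_of_pos (by linarith) _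
  exact div_pos one_pos this

lemma cos_angle_lt_one (n : ℕ) [NeZero n] (k : Fin n) (hk : k ≠ 0) :
    Real.cos (2 * π * ((k : ℕ) : ℝ) / n) < 1 := by
  have hn : (0 : ℝ) < n := by
    exact_mod_cast Nat.pos_of_ne_zero (NeZero.ne n)
  have hk1 : 1 ≤ (k : ℕ) := Nat.one_le_iff_ne_zero.2 (Fin.val_ne_zero_iff.mpr hk)
  have hkn : ((k : ℕ) : ℝ) < n := by exact_mod_cast k.isLt
  have hk1' : (1 : ℝ) ≤ ((k : ℕ) : ℝ) := by exact_mod_cast hk1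
  apply cos_lt_one_of_pos_of_lt
  · have : (0 : ℝ) < 2 * π := by positivity
    positivity
  · rw [div_lt_iff₀ hn]
    have : (0 : ℝ) < 2 * π := by positivity
    nlinarith

lemma Cval_pos (n : ℕ) [NeZero n] (hn : 2 ≤ n) (r : ℝ) (hr0 : 0 < r) (hr1 : r < 1) :
    0 < Cval n r := by
  apply Finset.sum_pos
  · intro k hk
    have hk0 : k ≠ 0 := (Finset.mem_erase.1 hk).1
    have hc := cos_angle_lt_one n k hk0
    have hc1 := Real.neg_one_le_cos (2 * π * ((k : ℕ) : ℝ) / n)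
    exact mul_pos (Afun_pos r hr0 hr1 hc1 hc) (by linarith)
  · refine ⟨⟨1, by omega⟩, ?_⟩
    rw [Finset.mem_erase]
    exact ⟨by simp [Fin.ext_iff], Finset.mem_univ _⟩

/-! ### Reindexing the interaction sums -/

lemma sum_C_eq (n : ℕ) [NeZero n] (r : ℝ) (i : Fin n) :
    ∑ j ∈ Finset.univ.erase i,
        Afun r (Real.cos (2 * π * ((i : ℕ) : ℝ) / n - 2 * π * ((j : ℕ) : ℝ) / n)) *
          (1 - Real.cos (2 * π * ((i : ℕ) : ℝ) / n - 2 * π * ((j : ℕ) : ℝ) / n))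
      = Cval n r := by
  unfold Cval
  apply Finset.sum_nbij' (i := fun j => j - i) (j := fun k => k + i)
  · intro j hj
    rw [Finset.mem_erase] at *
    exact ⟨sub_ne_zero_of_ne hj.1, Finset.mem_univ _⟩
  · intro k hk
    rw [Finset.mem_erase] at *
    refine ⟨?_, Finset.mem_univ _⟩
    intro h
    exact hk.1 (by rwa [add_eq_right] at h)
  · intro j _; exact sub_add_cancel j i
  · intro k _; exact add_sub_cancel_right k i
  · intro j _
    rw [cos_shift]

lemma neg_angle (n : ℕ) [NeZero n] (k : Fin n) (hk : k ≠ 0) :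
    2 * π * (((-k : Fin n) : ℕ) : ℝ) / n = 2 * π - 2 * π * ((k : ℕ) : ℝ) / n := by
  have hn : (n : ℝ) ≠ 0 := Nat.cast_ne_zero.2 (NeZero.ne n)
  have hk1 : 1 ≤ (k : ℕ) := Nat.one_le_iff_ne_zero.2 (Fin.val_ne_zero_iff.mpr hk)
  have hkn : (k : ℕ) < n := k.isLt
  have hval : ((-k : Fin n) : ℕ) = n - (k : ℕ) := by
    have h0 : ((-k : Fin n) : ℕ) = (n - (k : ℕ)) % n := rfl
    rw [h0, Nat.mod_eq_of_lt (by omega)]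
  rw [hval]
  have hcast : ((n - (k : ℕ) : ℕ) : ℝ) = (n : ℝ) - ((k : ℕ) : ℝ) := by
    push_cast [Nat.cast_sub (le_of_lt hkn)]; ring
  rw [hcast]
  field_simp

lemma sum_S_zero_aux (n : ℕ) [NeZero n] (r : ℝ) :
    ∑ k ∈ Finset.univ.erase (0 : Fin n),
        Afun r (Real.cos (2 * π * ((k : ℕ) : ℝ) / n)) *
          Real.sin (2 * π * ((k : ℕ) : ℝ) / n) = 0 := by
  set F : Fin n → ℝ := fun k =>
    Afun r (Real.cos (2 * π * ((k : ℕ) : ℝ) / n)) *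
      Real.sin (2 * π * ((k : ℕ) : ℝ) / n) with hF
  have key : ∑ k ∈ Finset.univ.erase (0 : Fin n), F k
      = ∑ k ∈ Finset.univ.erase (0 : Fin n), -(F k) := by
    apply Finset.sum_nbij' (i := fun k => -k) (j := fun k => -k)
    · intro k hk
      rw [Finset.mem_erase] at *
      exact ⟨neg_ne_zero.2 hk.1, Finset.mem_univ _⟩
    · intro k hk
      rw [Finset.mem_erase] at *
      exact ⟨neg_ne_zero.2 hk.1, Finset.mem_univ _⟩
    · intro k _; exact neg_neg k
    · intro k _; exact neg_neg k
    · intro k hk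
      have hk0 : k ≠ 0 := (Finset.mem_erase.1 hk).1
      simp only [hF]
      rw [neg_angle n k hk0, Real.cos_two_pi_sub, Real.sin_two_pi_sub]
      ring
  have h2 : ∑ k ∈ Finset.univ.erase (0 : Fin n), -(F k)
      = -∑ k ∈ Finset.univ.erase (0 : Fin n), F k := by
    rw [Finset.sum_neg_distrib]
  rw [h2] at key
  linarith

lemma sum_S_eq (n : ℕ) [NeZero n] (r : ℝ) (i : Fin n) :
    ∑ j ∈ Finset.univ.erase i,
        Afun r (Real.cos (2 * π * ((i : ℕ) : ℝ) / n - 2 * π * ((j : ℕ) : ℝ) / n)) *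
          Real.sin (2 * π * ((i : ℕ) : ℝ) / n - 2 * π * ((j : ℕ) : ℝ) / n)
      = 0 := by
  have step : ∑ j ∈ Finset.univ.erase i,
      Afun r (Real.cos (2 * π * ((i : ℕ) : ℝ) / n - 2 * π * ((j : ℕ) : ℝ) / n)) *
        Real.sin (2 * π * ((i : ℕ) : ℝ) / n - 2 * π * ((j : ℕ) : ℝ) / n)
      = ∑ k ∈ Finset.univ.erase (0 : Fin n),
          -(Afun r (Real.cos (2 * π * ((k : ℕ) : ℝ) / n)) *
            Real.sin (2 * π * ((k : ℕ) : ℝ) / n)) := by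
    apply Finset.sum_nbij' (i := fun j => j - i) (j := fun k => k + i)
    · intro j hj
      rw [Finset.mem_erase] at *
      exact ⟨sub_ne_zero_of_ne hj.1, Finset.mem_univ _⟩
    · intro k hk
      rw [Finset.mem_erase] at *
      refine ⟨?_, Finset.mem_univ _⟩
      intro h
      exact hk.1 (by rwa [add_eq_right] at h)
    · intro j _; exact sub_add_cancel j i
    · intro k _; exact add_sub_cancel_right k i
    · intro j _
      rw [cos_shift, sin_shift]
      ring
  rw [step, Finset.sum_neg_distrib, sum_S_zero_aux, neg_zero]

/-! ### Derivatives of the polygon configuration -/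

/-- Velocity of body `i`. -/
def polyVel (n : ℕ) (r Ω : ℝ) (i : Fin n) (t : ℝ) : ℝ × ℝ × ℝ :=
  (-(r * Ω * Real.sin (Ω * t + 2 * π * ((i : ℕ) : ℝ) / n)),
   r * Ω * Real.cos (Ω * t + 2 * π * ((i : ℕ) : ℝ) / n),
   0)

/-- Acceleration of body `i`. -/
def polyAcc (n : ℕ) (r Ω : ℝ) (i : Fin n) (t : ℝ) : ℝ × ℝ × ℝ :=
  (-(r * Ω ^ 2 * Real.cos (Ω * t + 2 * π * ((i : ℕ) : ℝ) / n)),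
   -(r * Ω ^ 2 * Real.sin (Ω * t + 2 * π * ((i : ℕ) : ℝ) / n)),
   0)

lemma hasDerivAt_theta (Ω c t : ℝ) : HasDerivAt (fun s => Ω * s + c) Ω t := by
  simpa using ((hasDerivAt_id t).const_mul Ω).add_const c

lemma hasDerivAt_polygonS (n : ℕ) (r Ω : ℝ) (i : Fin n) (t : ℝ) :
    HasDerivAt (polygonS n r Ω i) (polyVel n r Ω i t) t := by
  set c := 2 * π * ((i : ℕ) : ℝ) / n with hc
  have hθ := hasDerivAt_theta Ω c t
  have hx : HasDerivAt (fun s => r * Real.cos (Ω * s + c))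
      (-(r * Ω * Real.sin (Ω * t + c))) t := by
    have := (hθ.cos).const_mul r
    refine this.congr_deriv ?_
    ring
  have hy : HasDerivAt (fun s => r * Real.sin (Ω * s + c))
      (r * Ω * Real.cos (Ω * t + c)) t := by
    have := (hθ.sin).const_mul r
    refine this.congr_deriv ?_
    ring
  have hz : HasDerivAt (fun _ : ℝ => Real.sqrt (1 - r ^ 2)) (0 : ℝ) t :=
    hasDerivAt_const t _
  exact hx.prodMk (hy.prodMk hz)

lemma hasDerivAt_polyVel (n : ℕ) (r Ω : ℝ) (i : Fin n) (t : ℝ) :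
    HasDerivAt (polyVel n r Ω i) (polyAcc n r Ω i t) t := by
  set c := 2 * π * ((i : ℕ) : ℝ) / n with hc
  have hθ := hasDerivAt_theta Ω c t
  have hx : HasDerivAt (fun s => -(r * Ω * Real.sin (Ω * s + c)))
      (-(r * Ω ^ 2 * Real.cos (Ω * t + c))) t := by
    have := ((hθ.sin).const_mul (r * Ω)).neg
    refine this.congr_deriv ?_
    ring
  have hy : HasDerivAt (fun s => r * Ω * Real.cos (Ω * s + c))
      (-(r * Ω ^ 2 * Real.sin (Ω * t + c))) t := by
    have := (hθ.cos).const_mul (r * Ω)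
    refine this.congr_deriv ?_
    ring
  have hz : HasDerivAt (fun _ : ℝ => (0 : ℝ)) (0 : ℝ) t := hasDerivAt_const t _
  exact hx.prodMk (hy.prodMk hz)

lemma deriv_polygonS (n : ℕ) (r Ω : ℝ) (i : Fin n) :
    deriv (polygonS n r Ω i) = polyVel n r Ω i := by
  funext t
  exact (hasDerivAt_polygonS n r Ω i t).deriv

lemma deriv2_polygonS (n : ℕ) (r Ω : ℝ) (i : Fin n) (t : ℝ) :
    deriv (deriv (polygonS n r Ω i)) t = polyAcc n r Ω i t := by
  rw [deriv_polygonS]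
  exact (hasDerivAt_polyVel n r Ω i t).deriv

lemma dot3_polyVel (n : ℕ) (r Ω : ℝ) (i : Fin n) (t : ℝ) :
    dot3 (polyVel n r Ω i t) (polyVel n r Ω i t) = r ^ 2 * Ω ^ 2 := by
  have h := Real.sin_sq_add_cos_sq (Ω * t + 2 * π * ((i : ℕ) : ℝ) / n)
  simp only [dot3, polyVel]
  nlinarith [h]

/-! ### The main computation -/

lemma triple_eval (r z A cθ sθ cδ sδ : ℝ) :
    A • (((r * (cθ * cδ + sθ * sδ), r * (sθ * cδ - cθ * sδ), z) : ℝ × ℝ × ℝ)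
        - (r ^ 2 * cδ + (1 - r ^ 2)) • ((r * cθ, r * sθ, z) : ℝ × ℝ × ℝ))
      = ((r * cθ * (-(1 - r ^ 2))) * (A * (1 - cδ)) + (r * sθ) * (A * sδ),
         (r * sθ * (-(1 - r ^ 2))) * (A * (1 - cδ)) + (-(r * cθ)) * (A * sδ),
         (z * r ^ 2) * (A * (1 - cδ))) := by
  simp only [Prod.smul_mk, Prod.mk_sub_mk, smul_eq_mul, Prod.mk.injEq]
  refine ⟨by ring, by ring, by ring⟩

lemma polygon_is_solution (n : ℕ) [NeZero n] (hn : 2 ≤ n) (r : ℝ) (hr0 : 0 < r)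
    (hr1 : r < 1) (Ω : ℝ) (hΩ : Ω ^ 2 = Cval n r) :
    IsSphereSolution n (polygonS n r Ω) := by
  have hr2 : r ^ 2 ≤ 1 := by nlinarith
  constructor
  · intro i t
    exact dot3_polygon_self n r Ω hr2 i t
  intro i t
  rw [deriv2_polygonS, deriv_polygonS, dot3_polyVel]
  set z := Real.sqrt (1 - r ^ 2) with hzdef
  set θ := Ω * t + 2 * π * ((i : ℕ) : ℝ) / n with hθdef
  set δ : Fin n → ℝ := fun j => 2 * π * ((i : ℕ) : ℝ) / n - 2 * π * ((j : ℕ) : ℝ) / n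
    with hδdef
  set G : Fin n → ℝ := fun j => Afun r (Real.cos (δ j)) * (1 - Real.cos (δ j)) with hGdef
  set H : Fin n → ℝ := fun j => Afun r (Real.cos (δ j)) * Real.sin (δ j) with hHdef
  have hqi : polygonS n r Ω i t = ((r * Real.cos θ, r * Real.sin θ, z) : ℝ × ℝ × ℝ) := by
    simp only [polygonS, ← hθdef, ← hzdef]
  have hqj : ∀ j : Fin n, polygonS n r Ω j t
      = ((r * (Real.cos θ * Real.cos (δ j) + Real.sin θ * Real.sin (δ j)),
          r * (Real.sin θ * Real.cos (δ j) - Real.cos θ * Real.sin (δ j)), z) : ℝ × ℝ × ℝ) := by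
    intro j
    have hang : Ω * t + 2 * π * ((j : ℕ) : ℝ) / n = θ - δ j := by
      simp only [hθdef, hδdef]; ring
    simp only [polygonS, hang, Real.cos_sub, Real.sin_sub, ← hzdef]
  have hdot : ∀ j : Fin n, dot3 (polygonS n r Ω i t) (polygonS n r Ω j t)
      = dfun r (Real.cos (δ j)) := fun j => dot3_polygon n r Ω hr2 i j t
  have hsummand : ∀ j ∈ Finset.univ.erase i,
      (1 / (1 - dot3 (polygonS n r Ω i t) (polygonS n r Ω j t) ^ 2) ^ ((3 : ℝ) / 2)) •
          (polygonS n r Ω j t - dot3 (polygonS n r Ω i t) (polygonS n r Ω j t) •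
            polygonS n r Ω i t)
        = (((r * Real.cos θ * (-(1 - r ^ 2))) * G j + (r * Real.sin θ) * H j,
           (r * Real.sin θ * (-(1 - r ^ 2))) * G j + (-(r * Real.cos θ)) * H j,
           (z * r ^ 2) * G j) : ℝ × ℝ × ℝ) := by
    intro j _
    rw [hdot j, hqj j, hqi]
    have hA : (1 / (1 - dfun r (Real.cos (δ j)) ^ 2) ^ ((3 : ℝ) / 2))
        = Afun r (Real.cos (δ j)) := rfl
    have hd : dfun r (Real.cos (δ j)) = r ^ 2 * Real.cos (δ j) + (1 - r ^ 2) := rfl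
    rw [hA]
    rw [hd]
    exact triple_eval r z (Afun r (Real.cos (δ j))) (Real.cos θ) (Real.sin θ)
      (Real.cos (δ j)) (Real.sin (δ j))
  rw [Finset.sum_congr rfl hsummand]
  have hC : ∑ j ∈ Finset.univ.erase i, G j = Cval n r := sum_C_eq n r i
  have hS : ∑ j ∈ Finset.univ.erase i, H j = 0 := sum_S_eq n r i
  have hsum : ∑ j ∈ Finset.univ.erase i,
      ((((r * Real.cos θ * (-(1 - r ^ 2))) * G j + (r * Real.sin θ) * H j,
        (r * Real.sin θ * (-(1 - r ^ 2))) * G j + (-(r * Real.cos θ)) * H j,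
        (z * r ^ 2) * G j)) : ℝ × ℝ × ℝ)
      = (((r * Real.cos θ * (-(1 - r ^ 2))) * Cval n r,
         (r * Real.sin θ * (-(1 - r ^ 2))) * Cval n r,
         (z * r ^ 2) * Cval n r) : ℝ × ℝ × ℝ) := by
    refine Prod.ext ?_ (Prod.ext ?_ ?_)
    · rw [Prod.fst_sum]
      simp only
      rw [Finset.sum_add_distrib, ← Finset.mul_sum, ← Finset.mul_sum, hC, hS, mul_zero,
        add_zero]
    · rw [Prod.snd_sum, Prod.fst_sum]
      simp only
      rw [Finset.sum_add_distrib, ← Finset.mul_sum, ← Finset.mul_sum, hC, hS, mul_zero,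
        add_zero]
    · rw [Prod.snd_sum, Prod.snd_sum]
      simp only
      rw [← Finset.mul_sum, hC]
  rw [hsum, ← hΩ, hqi]
  simp only [polyAcc, ← hθdef, Prod.smul_mk, smul_eq_mul, Prod.mk_sub_mk, Prod.mk.injEq]
  refine ⟨by ring, by ring, by ring⟩

/-- For `n` equal masses on `S²` in a regular polygon configuration at height
`z = √(1 − r²) ≠ 0` (i.e. `0 < r < 1`), there exist a positive and a negative angular
velocity making the rotating polygon a relative equilibrium solution. -/
theorem polygon_relative_equilibrium_exists_sphere
    (n : ℕ) (hn : 2 ≤ n) (r : ℝ) (hr0 : 0 < r) (hr1 : r < 1) :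
    ∃ Ωp Ωm : ℝ, 0 < Ωp ∧ Ωm < 0 ∧
      IsSphereSolution n (polygonS n r Ωp) ∧ IsSphereSolution n (polygonS n r Ωm) := by
  haveI : NeZero n := ⟨by omega⟩
  have hC := Cval_pos n hn r hr0 hr1
  refine ⟨Real.sqrt (Cval n r), -Real.sqrt (Cval n r), Real.sqrt_pos.2 hC, by
    simpa using Real.sqrt_pos.2 hC, ?_, ?_⟩
  · exact polygon_is_solution n hn r hr0 hr1 _ (Real.sq_sqrt (le_of_lt hC))
  · exact polygon_is_solution n hn r hr0 hr1 _ (by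
      rw [neg_pow, Real.sq_sqrt (le_of_lt hC)]; ring)
end
end

section
/- Let n ≥ 3 be odd, let 0 < r < 1, z = √(1 − r²), and Ω ∈ ℝ. The curves q_i(t) = (r cos(Ωt + 2π(i−1)/n), r sin(Ωt + 2π(i−1)/n), z), i = 1,…,n, form a solution of the curved n-body equations on S² if and only if Ω² = 2 Σ_{j=1}^{(n−1)/2} (1 − cos(2jπ/n)) / (1 − (r² cos(2jπ/n) + 1 − r²)²)^{3/2}. -/
open Real

noncomputable section

/-! ### Auxiliary material -/

section Aux

lemma hasDerivAt_poly (n : ℕ) (r Ω : ℝ) (i : Fin n) (t : ℝ) :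
    HasDerivAt (polygonS n r Ω i)
      (r * (-Real.sin (Ω * t + 2 * π * ((i : ℕ) : ℝ) / n) * Ω),
       r * (Real.cos (Ω * t + 2 * π * ((i : ℕ) : ℝ) / n) * Ω), (0:ℝ)) t := by
  have h1 : HasDerivAt (fun s : ℝ => Ω * s + 2 * π * ((i : ℕ) : ℝ) / n) Ω t := by
    simpa using ((hasDerivAt_id t).const_mul Ω).add_const (2 * π * ((i : ℕ) : ℝ) / n)
  exact (h1.cos.const_mul r).prodMk ((h1.sin.const_mul r).prodMk (hasDerivAt_const t _))

lemma deriv_poly (n : ℕ) (r Ω : ℝ) (i : Fin n) :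
    deriv (polygonS n r Ω i) = fun t =>
      (r * (-Real.sin (Ω * t + 2 * π * ((i : ℕ) : ℝ) / n) * Ω),
       r * (Real.cos (Ω * t + 2 * π * ((i : ℕ) : ℝ) / n) * Ω), (0:ℝ)) :=
  funext fun t => (hasDerivAt_poly n r Ω i t).deriv

lemma deriv2_poly (n : ℕ) (r Ω : ℝ) (i : Fin n) (t : ℝ) :
    deriv (deriv (polygonS n r Ω i)) t =
      (-(r * Ω ^ 2) * Real.cos (Ω * t + 2 * π * ((i : ℕ) : ℝ) / n),
       -(r * Ω ^ 2) * Real.sin (Ω * t + 2 * π * ((i : ℕ) : ℝ) / n), (0:ℝ)) := by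
  rw [deriv_poly]
  have h1 : HasDerivAt (fun s : ℝ => Ω * s + 2 * π * ((i : ℕ) : ℝ) / n) Ω t := by
    simpa using ((hasDerivAt_id t).const_mul Ω).add_const (2 * π * ((i : ℕ) : ℝ) / n)
  have hfe : (fun t => (r * (-Real.sin (Ω * t + 2 * π * ((i : ℕ) : ℝ) / n) * Ω),
       r * (Real.cos (Ω * t + 2 * π * ((i : ℕ) : ℝ) / n) * Ω), (0:ℝ)))
      = (fun t => (-(r * Ω) * Real.sin (Ω * t + 2 * π * ((i : ℕ) : ℝ) / n),
       (r * Ω) * Real.cos (Ω * t + 2 * π * ((i : ℕ) : ℝ) / n), (0:ℝ))) := by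
    funext s; simp only [Prod.mk.injEq]; refine ⟨by ring, by ring, trivial⟩
  rw [hfe]
  have h := ((h1.sin.const_mul (-(r*Ω))).prodMk ((h1.cos.const_mul (r*Ω)).prodMk
      (hasDerivAt_const t (0:ℝ)))).deriv
  rw [h]; simp only [Prod.mk.injEq]; refine ⟨by ring, by ring, trivial⟩

lemma dot3_poly_self (n : ℕ) (r Ω : ℝ) (hr1 : r ≤ 1) (hr0 : -1 ≤ r) (i : Fin n) (t : ℝ) :
    dot3 (polygonS n r Ω i t) (polygonS n r Ω i t) = 1 := by
  have h0 : (0:ℝ) ≤ 1 - r ^ 2 := by nlinarith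
  have hs := Real.mul_self_sqrt h0
  have ht := Real.sin_sq_add_cos_sq (Ω * t + 2 * π * ((i : ℕ) : ℝ) / n)
  simp only [dot3, polygonS]
  nlinarith [hs, ht]

lemma dot3_poly (n : ℕ) (r Ω : ℝ) (hr : r ^ 2 ≤ 1) (i j : Fin n) (t : ℝ) :
    dot3 (polygonS n r Ω i t) (polygonS n r Ω j t) =
      r ^ 2 * Real.cos (2 * π * (((j : ℕ) : ℝ) - ((i : ℕ) : ℝ)) / n) + 1 - r ^ 2 := by
  have h0 : (0:ℝ) ≤ 1 - r ^ 2 := by linarith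
  have hs := Real.mul_self_sqrt h0
  have harg : 2 * π * (((j : ℕ) : ℝ) - ((i : ℕ) : ℝ)) / n =
      (Ω * t + 2 * π * ((j : ℕ) : ℝ) / n) - (Ω * t + 2 * π * ((i : ℕ) : ℝ) / n) := by ring
  rw [dot3]
  simp only [polygonS]
  rw [harg, Real.cos_sub, hs]; ring

lemma dot3_deriv_self (n : ℕ) (r Ω : ℝ) (i : Fin n) (t : ℝ) :
    dot3 (deriv (polygonS n r Ω i) t) (deriv (polygonS n r Ω i) t) = r ^ 2 * Ω ^ 2 := by
  rw [deriv_poly, dot3]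
  have ht := Real.sin_sq_add_cos_sq (Ω * t + 2 * π * ((i : ℕ) : ℝ) / n)
  nlinarith [ht]

lemma fin_sub_cast (n : ℕ) (hn : 0 < n) (i j : Fin n) :
    ∃ m : ℤ, ((((j - i : Fin n) : ℕ) : ℝ)) = ((j : ℕ) : ℝ) - ((i : ℕ) : ℝ) + m * n := by
  have hd : ((j - i : Fin n) : ℕ) = (n - i.val + j.val) % n := by
    rw [Fin.sub_def]
  set a := n - i.val + j.val with ha
  set q := a / n with hqd
  set b := a % n with hbd
  have hmd : b + n * q = a := Nat.mod_add_div a n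
  have hilt : i.val < n := i.isLt
  refine ⟨1 - (q : ℤ), ?_⟩
  have hZ : (b : ℤ) = (n : ℤ) - i.val + j.val - n * q := by omega
  have hR : (b : ℝ) = (n : ℝ) - i.val + j.val - n * q := by exact_mod_cast hZ
  rw [hd, hR]
  push_cast
  ring

lemma sum_reindex (n : ℕ) (hn : 3 ≤ n) (F : ℝ → ℝ)
    (hF : ∀ (x : ℝ) (m : ℤ), F (x + m * (2 * π)) = F x) (i : Fin n) :
    ∑ j ∈ Finset.univ.erase i, F (2 * π * (((j : ℕ) : ℝ) - ((i : ℕ) : ℝ)) / n)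
      = ∑ k ∈ Finset.Icc 1 (n - 1), F (2 * π * (k : ℝ) / n) := by
  have hn0 : 0 < n := by omega
  have hnR : ((n : ℕ) : ℝ) ≠ 0 := by positivity
  haveI : NeZero n := ⟨by omega⟩
  refine Finset.sum_bij' (fun j _ => ((j - i : Fin n) : ℕ))
    (fun k _ => (⟨k % n, Nat.mod_lt _ hn0⟩ : Fin n) + i) ?_ ?_ ?_ ?_ ?_
  · intro j hj
    have hji : j ≠ i := Finset.ne_of_mem_erase hj
    have hne : (j - i : Fin n) ≠ 0 := fun h => hji (sub_eq_zero.mp h)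
    simp only [Finset.mem_Icc]
    constructor
    · have : ((j - i : Fin n) : ℕ) ≠ 0 := fun h => hne (Fin.ext h)
      omega
    · have := (j - i : Fin n).isLt; omega
  · intro k hk
    simp only [Finset.mem_Icc] at hk
    have hklt : k < n := by omega
    have hkm : k % n = k := Nat.mod_eq_of_lt hklt
    refine Finset.mem_erase.mpr ⟨?_, Finset.mem_univ _⟩
    intro h
    have h' : (⟨k % n, Nat.mod_lt _ hn0⟩ : Fin n) + i = 0 + i := by
      rw [zero_add]; exact h
    have h0 : (⟨k % n, Nat.mod_lt _ hn0⟩ : Fin n) = 0 := add_right_cancel h'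
    have : k % n = 0 := congrArg Fin.val h0
    omega
  · intro j hj
    show (⟨((j - i : Fin n) : ℕ) % n, Nat.mod_lt _ hn0⟩ : Fin n) + i = j
    have hlt := (j - i : Fin n).isLt
    have heq : (⟨((j - i : Fin n) : ℕ) % n, Nat.mod_lt _ hn0⟩ : Fin n) = j - i := by
      apply Fin.ext; simp [Nat.mod_eq_of_lt hlt]
    rw [heq]; exact sub_add_cancel j i
  · intro k hk
    simp only [Finset.mem_Icc] at hk
    have hklt : k < n := by omega
    show (((⟨k % n, Nat.mod_lt _ hn0⟩ : Fin n) + i) - i : Fin n).val = k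
    rw [add_sub_cancel_right]
    simp [Nat.mod_eq_of_lt hklt]
  · intro j hj
    obtain ⟨m, hm⟩ := fin_sub_cast n hn0 i j
    show F _ = F _
    rw [hm]
    have : 2 * π * (((j : ℕ) : ℝ) - ((i : ℕ) : ℝ) + m * n) / n
        = 2 * π * (((j : ℕ) : ℝ) - ((i : ℕ) : ℝ)) / n + m * (2 * π) := by
      field_simp
    rw [this, hF]

lemma angle_flip_cos (n k : ℕ) (hn : 0 < n) (hk : k ≤ n) :
    Real.cos (2 * π * ((n - k : ℕ) : ℝ) / n) = Real.cos (2 * π * (k : ℝ) / n) := by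
  have hnR : ((n : ℕ) : ℝ) ≠ 0 := by positivity
  have hc : ((n - k : ℕ) : ℝ) = (n : ℝ) - k := by push_cast [Nat.cast_sub hk]; ring
  have harg : 2 * π * ((n : ℝ) - k) / n = 2 * π - 2 * π * (k : ℝ) / n := by
    field_simp
  rw [hc, harg, Real.cos_sub]
  simp [Real.cos_two_pi, Real.sin_two_pi]

lemma angle_flip_sin (n k : ℕ) (hn : 0 < n) (hk : k ≤ n) :
    Real.sin (2 * π * ((n - k : ℕ) : ℝ) / n) = -Real.sin (2 * π * (k : ℝ) / n) := by
  have hnR : ((n : ℕ) : ℝ) ≠ 0 := by positivity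
  have hc : ((n - k : ℕ) : ℝ) = (n : ℝ) - k := by push_cast [Nat.cast_sub hk]; ring
  have harg : 2 * π * ((n : ℝ) - k) / n = 2 * π - 2 * π * (k : ℝ) / n := by
    field_simp
  rw [hc, harg, Real.sin_sub]
  simp [Real.cos_two_pi, Real.sin_two_pi]

lemma sum_sin_zero (n : ℕ) (hn : 3 ≤ n) (hodd : Odd n) (G : ℝ → ℝ) :
    ∑ k ∈ Finset.Icc 1 (n - 1),
      G (Real.cos (2 * π * (k : ℝ) / n)) * Real.sin (2 * π * (k : ℝ) / n) = 0 := by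
  have hn0 : 0 < n := by omega
  refine Finset.sum_involution (fun k _ => n - k) ?_ ?_ ?_ ?_
  · intro k hk
    simp only [Finset.mem_Icc] at hk
    rw [angle_flip_cos n k hn0 (by omega), angle_flip_sin n k hn0 (by omega)]
    ring
  · intro k hk _
    simp only [Finset.mem_Icc] at hk
    intro h
    have h' : n - k = k := h
    obtain ⟨l, hl⟩ := hodd
    omega
  · intro k hk
    simp only [Finset.mem_Icc] at hk ⊢
    omega
  · intro k hk
    simp only [Finset.mem_Icc] at hk
    show n - (n - k) = k
    omega

lemma sum_halve (n : ℕ) (hn : 3 ≤ n) (hodd : Odd n) (G : ℝ → ℝ) :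
    ∑ k ∈ Finset.Icc 1 (n - 1), G (Real.cos (2 * π * (k : ℝ) / n))
      = 2 * ∑ k ∈ Finset.Icc 1 ((n - 1) / 2), G (Real.cos (2 * π * (k : ℝ) / n)) := by
  have hn0 : 0 < n := by omega
  obtain ⟨l, hl⟩ := hodd
  have hm : (n - 1) / 2 = l := by omega
  set m := (n - 1) / 2 with hmd
  have h2m : n - 1 = 2 * m := by omega
  have hsplit : ∑ k ∈ Finset.Ioc 0 m, G (Real.cos (2 * π * (k : ℝ) / n))
      + ∑ k ∈ Finset.Ioc m (n - 1), G (Real.cos (2 * π * (k : ℝ) / n))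
      = ∑ k ∈ Finset.Ioc 0 (n - 1), G (Real.cos (2 * π * (k : ℝ) / n)) :=
    Finset.sum_Ioc_consecutive _ (by omega) (by omega)
  have hIcc : ∀ a : ℕ, Finset.Icc 1 a = Finset.Ioc 0 a := by
    intro a; ext x; simp [Finset.mem_Icc, Finset.mem_Ioc, Nat.lt_iff_add_one_le]
  have hsecond : ∑ k ∈ Finset.Ioc m (n - 1), G (Real.cos (2 * π * (k : ℝ) / n))
      = ∑ k ∈ Finset.Ioc 0 m, G (Real.cos (2 * π * (k : ℝ) / n)) := by
    refine Finset.sum_bij' (fun k _ => n - k) (fun k _ => n - k) ?_ ?_ ?_ ?_ ?_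
    · intro k hk; simp only [Finset.mem_Ioc] at hk ⊢; omega
    · intro k hk; simp only [Finset.mem_Ioc] at hk ⊢; omega
    · intro k hk; simp only [Finset.mem_Ioc] at hk; show n - (n - k) = k; omega
    · intro k hk; simp only [Finset.mem_Ioc] at hk; show n - (n - k) = k; omega
    · intro k hk
      simp only [Finset.mem_Ioc] at hk
      rw [angle_flip_cos n k hn0 (by omega)]
  rw [hIcc, hIcc, ← hsplit, hsecond]
  ring

lemma sum_mk3 {α : Type*} (s : Finset α) (x y z : α → ℝ) :
    ∑ j ∈ s, ((x j, y j, z j) : ℝ × ℝ × ℝ)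
      = (∑ j ∈ s, x j, ∑ j ∈ s, y j, ∑ j ∈ s, z j) := by
  refine Prod.ext ?_ (Prod.ext ?_ ?_) <;>
    simp [Prod.fst_sum, Prod.snd_sum]

/-- The summand function `δ ↦ (1 − cos δ)/(1 − (r² cos δ + 1 − r²)²)^{3/2}`. -/
def fS (r δ : ℝ) : ℝ :=
  (1 - Real.cos δ) / (1 - (r ^ 2 * Real.cos δ + 1 - r ^ 2) ^ 2) ^ ((3 : ℝ) / 2)

/-- The summand function `δ ↦ sin δ/(1 − (r² cos δ + 1 − r²)²)^{3/2}`. -/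
def hS (r δ : ℝ) : ℝ :=
  Real.sin δ / (1 - (r ^ 2 * Real.cos δ + 1 - r ^ 2) ^ 2) ^ ((3 : ℝ) / 2)

lemma fS_periodic (r x : ℝ) (m : ℤ) : fS r (x + m * (2 * π)) = fS r x := by
  unfold fS; rw [Real.cos_add_int_mul_two_pi]

lemma hS_periodic (r x : ℝ) (m : ℤ) : hS r (x + m * (2 * π)) = hS r x := by
  unfold hS; rw [Real.cos_add_int_mul_two_pi, Real.sin_add_int_mul_two_pi]

lemma term_eval (n : ℕ) (r Ω : ℝ) (hr : r ^ 2 ≤ 1) (i j : Fin n) (t : ℝ) :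
    (1 / (1 - dot3 (polygonS n r Ω i t) (polygonS n r Ω j t) ^ 2) ^ ((3 : ℝ) / 2)) •
        (polygonS n r Ω j t -
          dot3 (polygonS n r Ω i t) (polygonS n r Ω j t) • polygonS n r Ω i t)
      = (-(1 - r ^ 2) * r * Real.cos (Ω * t + 2 * π * ((i : ℕ) : ℝ) / n) *
            fS r (2 * π * (((j : ℕ) : ℝ) - ((i : ℕ) : ℝ)) / n)
          - r * Real.sin (Ω * t + 2 * π * ((i : ℕ) : ℝ) / n) *
            hS r (2 * π * (((j : ℕ) : ℝ) - ((i : ℕ) : ℝ)) / n),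
        -(1 - r ^ 2) * r * Real.sin (Ω * t + 2 * π * ((i : ℕ) : ℝ) / n) *
            fS r (2 * π * (((j : ℕ) : ℝ) - ((i : ℕ) : ℝ)) / n)
          + r * Real.cos (Ω * t + 2 * π * ((i : ℕ) : ℝ) / n) *
            hS r (2 * π * (((j : ℕ) : ℝ) - ((i : ℕ) : ℝ)) / n),
        Real.sqrt (1 - r ^ 2) * r ^ 2 *
            fS r (2 * π * (((j : ℕ) : ℝ) - ((i : ℕ) : ℝ)) / n)) := by
  rw [dot3_poly n r Ω hr i j t]
  have hθj : Ω * t + 2 * π * ((j : ℕ) : ℝ) / n =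
      (Ω * t + 2 * π * ((i : ℕ) : ℝ) / n)
        + 2 * π * (((j : ℕ) : ℝ) - ((i : ℕ) : ℝ)) / n := by ring
  simp only [polygonS, fS, hS, Prod.smul_mk, Prod.mk_sub_mk, smul_eq_mul, Prod.mk.injEq]
  simp only [hθj, Real.cos_add, Real.sin_add]
  set D := (1 - (r ^ 2 * Real.cos (2 * π * (((j : ℕ) : ℝ) - ((i : ℕ) : ℝ)) / n)
      + 1 - r ^ 2) ^ 2) ^ ((3 : ℝ) / 2) with hD
  refine ⟨by ring, by ring, by ring⟩

lemma eom_iff (n : ℕ) (hn : 3 ≤ n) (hodd : Odd n) (r : ℝ) (hr0 : 0 < r) (hr1 : r < 1)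
    (Ω : ℝ) (i : Fin n) (t : ℝ) :
    (deriv (deriv (polygonS n r Ω i)) t =
      (∑ j ∈ Finset.univ.erase i,
        (1 / (1 - dot3 (polygonS n r Ω i t) (polygonS n r Ω j t) ^ 2) ^ ((3 : ℝ) / 2)) •
          (polygonS n r Ω j t -
            dot3 (polygonS n r Ω i t) (polygonS n r Ω j t) • polygonS n r Ω i t))
      - dot3 (deriv (polygonS n r Ω i) t) (deriv (polygonS n r Ω i) t) • polygonS n r Ω i t)
    ↔ Ω ^ 2 = ∑ k ∈ Finset.Icc 1 (n - 1), fS r (2 * π * (k : ℝ) / n) := by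
  have hr2 : r ^ 2 ≤ 1 := by nlinarith
  have hSg : ∑ j ∈ Finset.univ.erase i,
      fS r (2 * π * (((j : ℕ) : ℝ) - ((i : ℕ) : ℝ)) / n)
      = ∑ k ∈ Finset.Icc 1 (n - 1), fS r (2 * π * (k : ℝ) / n) :=
    sum_reindex n hn (fS r) (fS_periodic r) i
  have hSh : ∑ j ∈ Finset.univ.erase i,
      hS r (2 * π * (((j : ℕ) : ℝ) - ((i : ℕ) : ℝ)) / n) = 0 := by
    rw [sum_reindex n hn (hS r) (hS_periodic r) i]
    have hcongr : ∀ k ∈ Finset.Icc 1 (n - 1), hS r (2 * π * (k : ℝ) / n)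
        = (fun x => 1 / (1 - (r ^ 2 * x + 1 - r ^ 2) ^ 2) ^ ((3 : ℝ) / 2))
            (Real.cos (2 * π * (k : ℝ) / n)) * Real.sin (2 * π * (k : ℝ) / n) := by
      intro k _
      simp only [hS]
      ring
    rw [Finset.sum_congr rfl hcongr]
    exact sum_sin_zero n hn hodd (fun x => 1 / (1 - (r ^ 2 * x + 1 - r ^ 2) ^ 2) ^ ((3 : ℝ) / 2))
  rw [deriv2_poly, dot3_deriv_self,
    Finset.sum_congr rfl (fun j _ => term_eval n r Ω hr2 i j t), sum_mk3,
    Finset.sum_sub_distrib, Finset.sum_add_distrib,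
    ← Finset.mul_sum, ← Finset.mul_sum, ← Finset.mul_sum, ← Finset.mul_sum, ← Finset.mul_sum,
    hSg, hSh]
  set S := ∑ k ∈ Finset.Icc 1 (n - 1), fS r (2 * π * (k : ℝ) / n) with hSdef
  simp only [polygonS, Prod.smul_mk, Prod.mk_sub_mk, smul_eq_mul, Prod.mk.injEq]
  constructor
  · rintro ⟨h1, h2, h3⟩
    have hz : 0 < Real.sqrt (1 - r ^ 2) := Real.sqrt_pos.mpr (by nlinarith)
    have h4 : (r ^ 2 * (S - Ω ^ 2)) * Real.sqrt (1 - r ^ 2) = 0 := by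
      linear_combination -h3
    rcases mul_eq_zero.mp h4 with h5 | h5
    · rcases mul_eq_zero.mp h5 with h6 | h6
      · exact absurd h6 (by positivity)
      · linarith [sub_eq_zero.mp h6]
    · exact absurd h5 (ne_of_gt hz)
  · intro h
    refine ⟨by rw [h]; ring, by rw [h]; ring, by rw [h]; ring⟩

end Aux

/-- For odd `n ≥ 3` and `0 < r < 1`, the rotating regular `n`-gon at height
`z = √(1 − r²)` on `S²` is a solution of the curved `n`-body equations if and only if
`Ω² = 2 Σ_{j=1}^{(n−1)/2} (1 − cos(2jπ/n)) / (1 − (r² cos(2jπ/n) + 1 − r²)²)^{3/2}`. -/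
theorem polygon_relative_equilibrium_iff_sphere_odd
    (n : ℕ) (hn : 3 ≤ n) (hodd : Odd n) (r : ℝ) (hr0 : 0 < r) (hr1 : r < 1) (Ω : ℝ) :
    IsSphereSolution n (polygonS n r Ω) ↔
      Ω ^ 2 = 2 * ∑ j ∈ Finset.Icc 1 ((n - 1) / 2),
        (1 - Real.cos (2 * (j : ℝ) * π / n)) /
          (1 - (r ^ 2 * Real.cos (2 * (j : ℝ) * π / n) + 1 - r ^ 2) ^ 2) ^ ((3 : ℝ) / 2) := by
  have hhalf : ∑ k ∈ Finset.Icc 1 (n - 1), fS r (2 * π * (k : ℝ) / n)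
      = 2 * ∑ j ∈ Finset.Icc 1 ((n - 1) / 2),
        (1 - Real.cos (2 * (j : ℝ) * π / n)) /
          (1 - (r ^ 2 * Real.cos (2 * (j : ℝ) * π / n) + 1 - r ^ 2) ^ 2) ^ ((3 : ℝ) / 2) := by
    calc ∑ k ∈ Finset.Icc 1 (n - 1), fS r (2 * π * (k : ℝ) / n)
        = ∑ k ∈ Finset.Icc 1 (n - 1),
            (fun x => (1 - x) / (1 - (r ^ 2 * x + 1 - r ^ 2) ^ 2) ^ ((3 : ℝ) / 2))
              (Real.cos (2 * π * (k : ℝ) / n)) :=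
          Finset.sum_congr rfl (fun k _ => rfl)
      _ = 2 * ∑ k ∈ Finset.Icc 1 ((n - 1) / 2),
            (fun x => (1 - x) / (1 - (r ^ 2 * x + 1 - r ^ 2) ^ 2) ^ ((3 : ℝ) / 2))
              (Real.cos (2 * π * (k : ℝ) / n)) :=
          sum_halve n hn hodd (fun x => (1 - x) / (1 - (r ^ 2 * x + 1 - r ^ 2) ^ 2) ^ ((3 : ℝ) / 2))
      _ = 2 * ∑ j ∈ Finset.Icc 1 ((n - 1) / 2),
            (1 - Real.cos (2 * (j : ℝ) * π / n)) /
              (1 - (r ^ 2 * Real.cos (2 * (j : ℝ) * π / n) + 1 - r ^ 2) ^ 2)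
                ^ ((3 : ℝ) / 2) := by
          congr 1
          refine Finset.sum_congr rfl (fun j _ => ?_)
          have harg : 2 * π * (j : ℝ) / n = 2 * (j : ℝ) * π / n := by ring
          rw [harg]
  constructor
  · rintro ⟨hsph, heq⟩
    have := (eom_iff n hn hodd r hr0 hr1 Ω ⟨0, by omega⟩ 0).mp (heq ⟨0, by omega⟩ 0)
    rw [← hhalf]; exact this
  · intro h
    refine ⟨fun i t => dot3_poly_self n r Ω (le_of_lt hr1) (by linarith) i t, fun i t => ?_⟩
    exact (eom_iff n hn hodd r hr0 hr1 Ω i t).mpr (by rw [hhalf]; exact h)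
end
end

section
/- Let n ≥ 2 be even, let 0 < r < 1, z = √(1 − r²), and Ω ∈ ℝ. The curves q_i(t) = (r cos(Ωt + 2π(i−1)/n), r sin(Ωt + 2π(i−1)/n), z), i = 1,…,n, form a solution of the curved n-body equations on S² if and only if Ω² = 2 Σ_{j=1}^{n/2 − 1} (1 − cos(2jπ/n)) / (1 − (r² cos(2jπ/n) + 1 − r²)²)^{3/2} + 1/(4 r³ (1 − r²)^{3/2}). -/
open Real

noncomputable section

namespace PolyAux

/-- The angle of body `i` at time `t`. -/
def ang (n : ℕ) (Ω : ℝ) (i : ℕ) (t : ℝ) : ℝ := Ω * t + 2 * π * (i : ℝ) / n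

lemma polygonS_eq (n : ℕ) (r Ω : ℝ) (i : Fin n) (t : ℝ) :
    polygonS n r Ω i t
      = (r * cos (ang n Ω i t), r * sin (ang n Ω i t), Real.sqrt (1 - r ^ 2)) := rfl

lemma hasDerivAt_ang (n : ℕ) (Ω : ℝ) (i : ℕ) (t : ℝ) :
    HasDerivAt (ang n Ω i) Ω t := by
  unfold ang
  simpa using ((hasDerivAt_id t).const_mul Ω).add_const (2 * π * (i : ℝ) / n)

lemma hasDerivAt_polygonS (n : ℕ) (r Ω : ℝ) (i : Fin n) (t : ℝ) :
    HasDerivAt (polygonS n r Ω i)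
      (-(r * Ω) * sin (ang n Ω i t), (r * Ω) * cos (ang n Ω i t), 0) t := by
  have h := hasDerivAt_ang n Ω i t
  have hc : HasDerivAt (fun t => r * cos (ang n Ω i t))
      (-(r * Ω) * sin (ang n Ω i t)) t := by
    have := h.cos.const_mul r
    have e : r * (-sin (ang n Ω i t) * Ω) = -(r * Ω) * sin (ang n Ω i t) := by ring
    rwa [e] at this
  have hs : HasDerivAt (fun t => r * sin (ang n Ω i t))
      ((r * Ω) * cos (ang n Ω i t)) t := by
    have := h.sin.const_mul r
    have e : r * (cos (ang n Ω i t) * Ω) = (r * Ω) * cos (ang n Ω i t) := by ring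
    rwa [e] at this
  have hz : HasDerivAt (fun _ : ℝ => Real.sqrt (1 - r ^ 2)) 0 t := hasDerivAt_const _ _
  exact hc.prodMk (hs.prodMk hz)

lemma deriv_polygonS (n : ℕ) (r Ω : ℝ) (i : Fin n) :
    deriv (polygonS n r Ω i)
      = fun t => (-(r * Ω) * sin (ang n Ω i t), (r * Ω) * cos (ang n Ω i t), (0 : ℝ)) :=
  funext fun t => (hasDerivAt_polygonS n r Ω i t).deriv

lemma deriv2_polygonS (n : ℕ) (r Ω : ℝ) (i : Fin n) (t : ℝ) :
    deriv (deriv (polygonS n r Ω i)) t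
      = (-(r * Ω ^ 2) * cos (ang n Ω i t), -(r * Ω ^ 2) * sin (ang n Ω i t), 0) := by
  rw [deriv_polygonS]
  have h := hasDerivAt_ang n Ω i t
  have hc : HasDerivAt (fun t => -(r * Ω) * sin (ang n Ω i t))
      (-(r * Ω ^ 2) * cos (ang n Ω i t)) t := by
    have := h.sin.const_mul (-(r * Ω))
    have e : -(r * Ω) * (cos (ang n Ω i t) * Ω) = -(r * Ω ^ 2) * cos (ang n Ω i t) := by ring
    rwa [e] at this
  have hs : HasDerivAt (fun t => (r * Ω) * cos (ang n Ω i t))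
      (-(r * Ω ^ 2) * sin (ang n Ω i t)) t := by
    have := h.cos.const_mul (r * Ω)
    have e : (r * Ω) * (-sin (ang n Ω i t) * Ω) = -(r * Ω ^ 2) * sin (ang n Ω i t) := by ring
    rwa [e] at this
  have hz : HasDerivAt (fun _ : ℝ => (0 : ℝ)) 0 t := hasDerivAt_const _ _
  exact (hc.prodMk (hs.prodMk hz)).deriv

/-- The pairwise "cosine of spherical distance" as function of the index gap. -/
def cgap (n : ℕ) (r : ℝ) (k : ℕ) : ℝ := r ^ 2 * cos (2 * π * (k : ℝ) / n) + (1 - r ^ 2)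

/-- The force coefficient. -/
def fgap (n : ℕ) (r : ℝ) (k : ℕ) : ℝ := 1 / (1 - cgap n r k ^ 2) ^ ((3 : ℝ) / 2)

def Ssum (n : ℕ) (r : ℝ) : ℝ :=
  ∑ k ∈ Finset.Ico 1 n, fgap n r k * (1 - cos (2 * π * (k : ℝ) / n))

def Tsum (n : ℕ) (r : ℝ) : ℝ :=
  ∑ k ∈ Finset.Ico 1 n, fgap n r k * sin (2 * π * (k : ℝ) / n)

lemma sub_coe_congr {n : ℕ} (i j : Fin n) :
    ∃ m : ℤ, (((j - i : Fin n) : ℕ) : ℤ) = ((j : ℕ) : ℤ) - ((i : ℕ) : ℤ) + n * m := by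
  have hi : (i : ℕ) ≤ n := i.isLt.le
  set a := (j : ℕ) + (n - (i : ℕ)) with ha
  refine ⟨1 - ((a / n : ℕ) : ℤ), ?_⟩
  have hij : ((j - i : Fin n) : ℕ) = a % n := by
    simp [Fin.sub_def, ha]; congr 1; omega
  have h1 : a % n + n * (a / n) = a := Nat.mod_add_div _ _
  have h3 : ((a % n : ℕ) : ℤ) + (n : ℤ) * ((a / n : ℕ) : ℤ) = (a : ℤ) := by exact_mod_cast h1
  have h2 : (a : ℤ) = ((j : ℕ) : ℤ) + (n : ℤ) - ((i : ℕ) : ℤ) := by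
    rw [ha]; push_cast [Nat.cast_sub hi]; ring
  rw [hij]
  push_cast at h3 h2 ⊢
  linear_combination h3 + h2

/-- key angle congruence: the angle of body `j` equals the angle of body `i`
plus `2πk/n` modulo `2π`, where `k = j - i` in `Fin n`. -/
lemma ang_shift {n : ℕ} (hn : 0 < n) (Ω t : ℝ) (i j : Fin n) :
    ∃ m : ℤ, ang n Ω j t
      = ang n Ω i t + 2 * π * (((j - i : Fin n) : ℕ) : ℝ) / n + m * (2 * π) := by
  obtain ⟨m, hm⟩ := sub_coe_congr i j
  refine ⟨-m, ?_⟩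
  have hk : ((((j - i : Fin n) : ℕ) : ℕ) : ℝ)
      = ((j : ℕ) : ℝ) - ((i : ℕ) : ℝ) + (n : ℝ) * (m : ℝ) := by
    exact_mod_cast congrArg (fun x : ℤ => (x : ℝ)) hm
  have hn' : (n : ℝ) ≠ 0 := Nat.cast_ne_zero.mpr hn.ne'
  unfold ang
  rw [hk]
  field_simp
  push_cast
  ring

lemma cos_gap {n : ℕ} (hn : 0 < n) (Ω t : ℝ) (i j : Fin n) :
    cos (ang n Ω j t) = cos (ang n Ω i t + 2 * π * (((j - i : Fin n) : ℕ) : ℝ) / n) ∧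
    sin (ang n Ω j t) = sin (ang n Ω i t + 2 * π * (((j - i : Fin n) : ℕ) : ℝ) / n) := by
  obtain ⟨m, hm⟩ := ang_shift hn Ω t i j
  rw [hm]
  constructor
  · exact Real.cos_add_int_mul_two_pi _ m
  · exact Real.sin_add_int_mul_two_pi _ m

lemma dot3_polygonS {n : ℕ} (hn : 0 < n) (r Ω t : ℝ) (hr2 : r ^ 2 ≤ 1) (i j : Fin n) :
    dot3 (polygonS n r Ω i t) (polygonS n r Ω j t) = cgap n r ((j - i : Fin n) : ℕ) := by
  obtain ⟨hc, hs⟩ := cos_gap hn Ω t i j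
  rw [dot3, polygonS_eq, polygonS_eq]
  simp only
  rw [hc, hs, Real.cos_add, Real.sin_add,
    Real.mul_self_sqrt (by linarith : (0:ℝ) ≤ 1 - r ^ 2), cgap]
  have h := Real.sin_sq_add_cos_sq (ang n Ω i t)
  linear_combination (r ^ 2 * Real.cos (2 * π * (((j - i : Fin n) : ℕ) : ℝ) / n)) * h

lemma dot3_deriv (n : ℕ) (r Ω : ℝ) (i : Fin n) (t : ℝ) :
    dot3 (deriv (polygonS n r Ω i) t) (deriv (polygonS n r Ω i) t) = r ^ 2 * Ω ^ 2 := by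
  rw [deriv_polygonS]
  simp only [dot3]
  have h := Real.sin_sq_add_cos_sq (ang n Ω i t)
  linear_combination (r ^ 2 * Ω ^ 2) * h

lemma dot3_self (n : ℕ) (r Ω : ℝ) (hr2 : r ^ 2 ≤ 1) (i : Fin n) (t : ℝ) :
    dot3 (polygonS n r Ω i t) (polygonS n r Ω i t) = 1 := by
  rw [dot3, polygonS_eq]
  simp only
  rw [Real.mul_self_sqrt (by linarith : (0:ℝ) ≤ 1 - r ^ 2)]
  have h := Real.sin_sq_add_cos_sq (ang n Ω i t)
  linear_combination r ^ 2 * h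

open Fin.NatCast in
/-- reindexing the force sum. -/
lemma sum_force {n : ℕ} (hn : 0 < n) (r Ω t : ℝ) (hr2 : r ^ 2 ≤ 1) (i : Fin n) :
    (∑ j ∈ Finset.univ.erase i,
      (1 / (1 - dot3 (polygonS n r Ω i t) (polygonS n r Ω j t) ^ 2) ^ ((3 : ℝ) / 2)) •
        (polygonS n r Ω j t
          - dot3 (polygonS n r Ω i t) (polygonS n r Ω j t) • polygonS n r Ω i t))
    = ∑ k ∈ Finset.Ico 1 n, fgap n r k •
        ((r * cos (ang n Ω i t + 2 * π * (k : ℝ) / n),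
          r * sin (ang n Ω i t + 2 * π * (k : ℝ) / n), Real.sqrt (1 - r ^ 2))
         - cgap n r k • (r * cos (ang n Ω i t), r * sin (ang n Ω i t),
            Real.sqrt (1 - r ^ 2))) := by
  haveI : NeZero n := ⟨hn.ne'⟩
  refine Finset.sum_nbij' (fun j => ((j - i : Fin n) : ℕ)) (fun k => i + (k : Fin n))
    ?_ ?_ ?_ ?_ ?_
  · intro j hj
    rw [Finset.mem_erase] at hj
    rw [Finset.mem_Ico]
    have h1 : j - i ≠ 0 := sub_ne_zero_of_ne hj.1
    have h2 : ((j - i : Fin n) : ℕ) ≠ 0 := by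
      intro h; exact h1 (Fin.ext (by simpa using h))
    exact ⟨Nat.one_le_iff_ne_zero.mpr h2, (j - i).isLt⟩
  · intro k hk
    rw [Finset.mem_Ico] at hk
    rw [Finset.mem_erase]
    refine ⟨?_, Finset.mem_univ _⟩
    intro h
    have : (k : Fin n) = 0 := by
      have := congrArg (fun x => x - i) h
      simpa using this
    have : ((k : Fin n) : ℕ) = 0 := by rw [this]; rfl
    rw [Fin.val_cast_of_lt hk.2] at this
    omega
  · intro j hj
    show i + ((((j - i : Fin n) : ℕ)) : Fin n) = j
    rw [Fin.cast_val_eq_self (j - i)]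
    exact add_sub_cancel i j
  · intro k hk
    simp only [Finset.mem_Ico] at hk
    show (((i + (k : Fin n)) - i : Fin n) : ℕ) = k
    rw [add_sub_cancel_left]
    exact Fin.val_cast_of_lt hk.2
  · intro j hj
    rw [dot3_polygonS hn r Ω t hr2 i j]
    obtain ⟨hc, hs⟩ := cos_gap hn Ω t i j
    rw [polygonS_eq, polygonS_eq, hc, hs, fgap]

lemma two_pi_gap_sub {n : ℕ} (hn : 0 < n) (k : ℕ) (hk : k ≤ n) :
    2 * π * (((n - k : ℕ) : ℝ)) / n = 2 * π - 2 * π * (k : ℝ) / n := by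
  have hn' : (n : ℝ) ≠ 0 := Nat.cast_ne_zero.mpr hn.ne'
  rw [Nat.cast_sub hk]
  field_simp

lemma cgap_reflect {n : ℕ} (hn : 0 < n) (r : ℝ) (k : ℕ) (hk : k ≤ n) :
    cgap n r (n - k) = cgap n r k := by
  unfold cgap
  rw [two_pi_gap_sub hn k hk, Real.cos_two_pi_sub]

lemma fgap_reflect {n : ℕ} (hn : 0 < n) (r : ℝ) (k : ℕ) (hk : k ≤ n) :
    fgap n r (n - k) = fgap n r k := by
  unfold fgap
  rw [cgap_reflect hn r k hk]

lemma Tsum_eq_zero {n : ℕ} (hn : 0 < n) (r : ℝ) : Tsum n r = 0 := by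
  have key : Tsum n r = ∑ k ∈ Finset.Ico 1 n,
      -(fgap n r k * sin (2 * π * (k : ℝ) / n)) := by
    unfold Tsum
    refine Finset.sum_nbij' (fun k => n - k) (fun k => n - k) ?_ ?_ ?_ ?_ ?_
    · intro k hk; simp only [Finset.mem_Ico] at hk ⊢; omega
    · intro k hk; simp only [Finset.mem_Ico] at hk ⊢; omega
    · intro k hk; simp only [Finset.mem_Ico] at hk; show n - (n - k) = k; omega
    · intro k hk; simp only [Finset.mem_Ico] at hk; show n - (n - k) = k; omega
    · intro k hk
      simp only [Finset.mem_Ico] at hk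
      have hk' : k ≤ n := hk.2.le
      show fgap n r k * sin (2 * π * (k : ℝ) / n)
        = -(fgap n r (n - k) * sin (2 * π * ((n - k : ℕ) : ℝ) / n))
      rw [fgap_reflect hn r k hk', two_pi_gap_sub hn k hk', Real.sin_two_pi_sub]
      ring
  rw [Finset.sum_neg_distrib] at key
  unfold Tsum at *
  linarith

lemma sum_force_components {n : ℕ} (hn : 0 < n) (r Ω t : ℝ) (hr2 : r ^ 2 ≤ 1) (i : Fin n) :
    (∑ j ∈ Finset.univ.erase i,
      (1 / (1 - dot3 (polygonS n r Ω i t) (polygonS n r Ω j t) ^ 2) ^ ((3 : ℝ) / 2)) •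
        (polygonS n r Ω j t
          - dot3 (polygonS n r Ω i t) (polygonS n r Ω j t) • polygonS n r Ω i t))
    = (-(r * (1 - r ^ 2) * cos (ang n Ω i t)) * Ssum n r
         - (r * sin (ang n Ω i t)) * Tsum n r,
       -(r * (1 - r ^ 2) * sin (ang n Ω i t)) * Ssum n r
         + (r * cos (ang n Ω i t)) * Tsum n r,
       Real.sqrt (1 - r ^ 2) * r ^ 2 * Ssum n r) := by
  rw [sum_force hn r Ω t hr2 i]
  refine Prod.ext_iff.mpr ⟨?_, Prod.ext_iff.mpr ⟨?_, ?_⟩⟩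
  · rw [Prod.fst_sum]
    simp only [Prod.smul_fst, Prod.fst_sub, Prod.smul_mk, smul_eq_mul, Prod.mk_sub_mk]
    unfold Ssum Tsum
    rw [Finset.mul_sum, Finset.mul_sum, ← Finset.sum_sub_distrib]
    refine Finset.sum_congr rfl fun k hk => ?_
    rw [Real.cos_add]
    unfold cgap
    ring
  · rw [Prod.snd_sum, Prod.fst_sum]
    simp only [Prod.smul_snd, Prod.snd_sub, Prod.smul_fst, Prod.fst_sub, Prod.smul_mk,
      smul_eq_mul, Prod.mk_sub_mk]
    unfold Ssum Tsum
    rw [Finset.mul_sum, Finset.mul_sum, ← Finset.sum_add_distrib]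
    refine Finset.sum_congr rfl fun k hk => ?_
    rw [Real.sin_add]
    unfold cgap
    ring
  · rw [Prod.snd_sum, Prod.snd_sum]
    simp only [Prod.smul_snd, Prod.snd_sub, Prod.smul_mk, smul_eq_mul, Prod.mk_sub_mk]
    unfold Ssum
    rw [Finset.mul_sum]
    refine Finset.sum_congr rfl fun k hk => ?_
    unfold cgap
    ring

lemma eq_iff {n : ℕ} (hn : 0 < n) (r Ω : ℝ) (hr0 : 0 < r) (hr1 : r < 1) (i : Fin n) (t : ℝ) :
    (deriv (deriv (polygonS n r Ω i)) t =
      (∑ j ∈ Finset.univ.erase i,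
        (1 / (1 - dot3 (polygonS n r Ω i t) (polygonS n r Ω j t) ^ 2) ^ ((3 : ℝ) / 2)) •
          (polygonS n r Ω j t
            - dot3 (polygonS n r Ω i t) (polygonS n r Ω j t) • polygonS n r Ω i t))
      - dot3 (deriv (polygonS n r Ω i) t) (deriv (polygonS n r Ω i) t) • polygonS n r Ω i t)
    ↔ Ω ^ 2 = Ssum n r := by
  have hr2 : r ^ 2 ≤ 1 := by nlinarith
  have hz : 0 < Real.sqrt (1 - r ^ 2) := Real.sqrt_pos.mpr (by nlinarith)
  rw [deriv2_polygonS, sum_force_components hn r Ω t hr2 i, dot3_deriv, polygonS_eq,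
    Tsum_eq_zero hn r]
  set A := ang n Ω i t
  set z := Real.sqrt (1 - r ^ 2) with hzdef
  set S := Ssum n r with hSdef
  simp only [Prod.smul_mk, smul_eq_mul, Prod.mk_sub_mk, Prod.mk.injEq]
  constructor
  · rintro ⟨-, -, h3⟩
    have h4 : r ^ 2 * z * (S - Ω ^ 2) = 0 := by linear_combination -h3
    have h5 : r ^ 2 * z ≠ 0 := by positivity
    have h6 := (mul_eq_zero.mp h4).resolve_left h5
    linarith [h6]
  · intro hS
    rw [← hS]
    refine ⟨by ring, by ring, by ring⟩

lemma Ssum_eval {n : ℕ} (hn : 2 ≤ n) (heven : Even n) (r : ℝ) (hr0 : 0 < r) (hr1 : r < 1) :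
    Ssum n r = 2 * (∑ j ∈ Finset.Icc 1 (n / 2 - 1),
        (1 - Real.cos (2 * (j : ℝ) * π / n)) /
          (1 - (r ^ 2 * Real.cos (2 * (j : ℝ) * π / n) + 1 - r ^ 2) ^ 2) ^ ((3 : ℝ) / 2))
        + 1 / (4 * r ^ 3 * (1 - r ^ 2) ^ ((3 : ℝ) / 2)) := by
  obtain ⟨m, hm⟩ := heven
  have hm1 : 1 ≤ m := by omega
  have h0 : 0 < n := by omega
  set g : ℕ → ℝ := fun k => fgap n r k * (1 - cos (2 * π * (k : ℝ) / n)) with hg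
  have gr : ∀ k, 1 ≤ k → k < n → g (n - k) = g k := by
    intro k h1 h2
    rw [hg]
    simp only
    rw [fgap_reflect h0 r k (by omega), two_pi_gap_sub h0 k (by omega), Real.cos_two_pi_sub]
  have hsplit : Ssum n r = (∑ k ∈ Finset.Ico 1 m, g k) + ∑ k ∈ Finset.Ico m n, g k :=
    (Finset.sum_Ico_consecutive g (by omega) (by omega)).symm
  have hbot : ∑ k ∈ Finset.Ico m n, g k = g m + ∑ k ∈ Finset.Ico (m + 1) n, g k :=
    Finset.sum_eq_sum_Ico_succ_bot (by omega) g
  have hrefl : ∑ k ∈ Finset.Ico (m + 1) n, g k = ∑ k ∈ Finset.Ico 1 m, g k := by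
    refine Finset.sum_nbij' (fun k => n - k) (fun k => n - k) ?_ ?_ ?_ ?_ ?_
    · intro k hk; simp only [Finset.mem_Ico] at hk ⊢; omega
    · intro k hk; simp only [Finset.mem_Ico] at hk ⊢; omega
    · intro k hk; simp only [Finset.mem_Ico] at hk; show n - (n - k) = k; omega
    · intro k hk; simp only [Finset.mem_Ico] at hk; show n - (n - k) = k; omega
    · intro k hk
      simp only [Finset.mem_Ico] at hk
      show g k = g (n - k)
      rw [gr k (by omega) (by omega)]
  have hmid : g m = 1 / (4 * r ^ 3 * (1 - r ^ 2) ^ ((3 : ℝ) / 2)) := by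
    have hπ : 2 * π * (m : ℝ) / n = π := by
      have hnm : (n : ℝ) = 2 * (m : ℝ) := by rw [hm]; push_cast; ring
      have hm0 : ((m : ℝ)) ≠ 0 := by positivity
      rw [hnm]
      field_simp
    rw [hg]
    simp only
    unfold fgap cgap
    rw [hπ, Real.cos_pi]
    have hbase : 1 - (r ^ 2 * (-1) + (1 - r ^ 2)) ^ 2 = (2 * r) ^ 2 * (1 - r ^ 2) := by ring
    rw [hbase, Real.mul_rpow (by positivity) (by nlinarith)]
    have h2r : (((2 * r) ^ 2 : ℝ)) ^ ((3 : ℝ) / 2) = (2 * r) ^ (3 : ℕ) := by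
      rw [← Real.rpow_natCast (2 * r) 2, ← Real.rpow_mul (by positivity : (0:ℝ) ≤ 2 * r),
        ← Real.rpow_natCast (2 * r) 3]
      norm_num
    rw [h2r]
    ring
  have hIcc : Finset.Icc 1 (n / 2 - 1) = Finset.Ico 1 m := by
    rw [← Finset.Ico_add_one_right_eq_Icc]
    congr 1
    omega
  have hstmt : (∑ j ∈ Finset.Icc 1 (n / 2 - 1),
      (1 - Real.cos (2 * (j : ℝ) * π / n)) /
        (1 - (r ^ 2 * Real.cos (2 * (j : ℝ) * π / n) + 1 - r ^ 2) ^ 2) ^ ((3 : ℝ) / 2))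
      = ∑ k ∈ Finset.Ico 1 m, g k := by
    refine Finset.sum_congr hIcc fun j hj => ?_
    rw [hg]
    simp only
    unfold fgap cgap
    rw [show 2 * (j : ℝ) * π / n = 2 * π * (j : ℝ) / n by ring,
      show r ^ 2 * cos (2 * π * (j : ℝ) / n) + 1 - r ^ 2
        = r ^ 2 * cos (2 * π * (j : ℝ) / n) + (1 - r ^ 2) by ring]
    ring
  rw [hstmt, hsplit, hbot, hrefl, hmid]
  linarith

end PolyAux

/-- For even `n ≥ 2` and `0 < r < 1`, the rotating regular `n`-gon at height
`z = √(1 − r²)` on `S²` is a solution of the curved `n`-body equations if and only if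
`Ω² = 2 Σ_{j=1}^{n/2−1} (1 − cos(2jπ/n)) / (1 − (r² cos(2jπ/n) + 1 − r²)²)^{3/2}
      + 1/(4 r³ (1 − r²)^{3/2})`. -/
theorem polygon_relative_equilibrium_iff_sphere_even
    (n : ℕ) (hn : 2 ≤ n) (heven : Even n) (r : ℝ) (hr0 : 0 < r) (hr1 : r < 1) (Ω : ℝ) :
    IsSphereSolution n (polygonS n r Ω) ↔
      Ω ^ 2 = 2 * (∑ j ∈ Finset.Icc 1 (n / 2 - 1),
        (1 - Real.cos (2 * (j : ℝ) * π / n)) /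
          (1 - (r ^ 2 * Real.cos (2 * (j : ℝ) * π / n) + 1 - r ^ 2) ^ 2) ^ ((3 : ℝ) / 2))
        + 1 / (4 * r ^ 3 * (1 - r ^ 2) ^ ((3 : ℝ) / 2)) := by
  have h0 : 0 < n := by omega
  have hr2 : r ^ 2 ≤ 1 := by nlinarith
  rw [← PolyAux.Ssum_eval hn heven r hr0 hr1]
  constructor
  · rintro ⟨-, h2⟩
    exact (PolyAux.eq_iff h0 r Ω hr0 hr1 ⟨0, h0⟩ 0).mp (h2 ⟨0, h0⟩ 0)
  · intro hS
    exact ⟨fun i t => PolyAux.dot3_self n r Ω hr2 i t,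
           fun i t => (PolyAux.eq_iff h0 r Ω hr0 hr1 i t).mpr hS⟩

end
end

section
/- Let 0 < r < 1, z₀ = √(1 − r²), and let k, h ∈ ℝ with k² + h² = r². Set w = (k + ih)/(1 + z₀) ∈ ℂ and ŵ = −(k + ih)/(1 − z₀) ∈ ℂ. Then for every z = u + iv ∈ ℂ (u, v ∈ ℝ) one has the identity (1 + |z|²)² − (2ku + 2hv + z₀(1 − |z|²))² = r² |z − w|² |z − ŵ|². (This identity expresses the denominator of the cotangent potential on S², written in stereographic coordinates, as a product of distances to the projected position of a primary and to the projection of its antipode.) -/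
open Real Complex

/-- Stereographic-coordinate factorization of the denominator of the cotangent potential
on `S²`:  if `(k, h, z₀)` is a point of the unit sphere with `k² + h² = r²`,
`z₀ = √(1 − r²)`, `w` is its stereographic projection (from `(0,0,−1)`) and `wHat` that of
its antipode, then for every `z = u + iv ∈ ℂ`,
`(1 + |z|²)² − (2ku + 2hv + z₀(1 − |z|²))² = r² |z − w|² |z − wHat|²`. -/
theorem sphere_denominator_factorization
    (r z₀ k h : ℝ) (hr0 : 0 < r) (hr1 : r < 1)
    (hz₀ : z₀ = Real.sqrt (1 - r ^ 2)) (hkh : k ^ 2 + h ^ 2 = r ^ 2)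
    (u v : ℝ) (z w wHat : ℂ)
    (hz : z = (u : ℂ) + (v : ℂ) * Complex.I)
    (hw : w = ((k : ℂ) + (h : ℂ) * Complex.I) / (1 + (z₀ : ℂ)))
    (hwHat : wHat = -((k : ℂ) + (h : ℂ) * Complex.I) / (1 - (z₀ : ℂ))) :
    (1 + ‖z‖ ^ 2) ^ 2
        - (2 * k * u + 2 * h * v + z₀ * (1 - ‖z‖ ^ 2)) ^ 2
      = r ^ 2 * ‖z - w‖ ^ 2 * ‖z - wHat‖ ^ 2 := by
  have hr2 : (0:ℝ) < 1 - r ^ 2 := by nlinarith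
  have hz0pos : 0 < z₀ := by rw [hz₀]; positivity
  have hz0sq : z₀ ^ 2 = 1 - r ^ 2 := by rw [hz₀]; exact Real.sq_sqrt hr2.le
  have hz0lt : z₀ < 1 := by nlinarith
  have ha : (1 + z₀) ≠ 0 := by positivity
  have hb : (1 - z₀) ≠ 0 := by linarith
  have haC : (1 + (z₀:ℂ)) ≠ 0 := by
    rw [show (1 + (z₀:ℂ)) = ((1 + z₀ : ℝ) : ℂ) by push_cast; ring]
    exact_mod_cast Complex.ofReal_ne_zero.2 ha
  have hbC : (1 - (z₀:ℂ)) ≠ 0 := by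
    rw [show (1 - (z₀:ℂ)) = ((1 - z₀ : ℝ) : ℂ) by push_cast; ring]
    exact_mod_cast Complex.ofReal_ne_zero.2 hb
  have h1 : z - w = ((u - k/(1+z₀) : ℝ) : ℂ) + ((v - h/(1+z₀) : ℝ) : ℂ) * Complex.I := by
    rw [hz, hw]; push_cast; field_simp; ring
  have h2 : z - wHat = ((u + k/(1-z₀) : ℝ) : ℂ) + ((v + h/(1-z₀) : ℝ) : ℂ) * Complex.I := by
    rw [hz, hwHat]; push_cast; field_simp; ring
  have habs : ∀ a b : ℝ, ‖(a:ℂ) + (b:ℂ)*Complex.I‖ ^ 2 = a^2 + b^2 :=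
    fun a b => by rw [Complex.sq_norm, Complex.normSq_add_mul_I]
  have e1 : 1 + ‖z‖ ^ 2 - (2 * k * u + 2 * h * v + z₀ * (1 - ‖z‖ ^ 2))
      = (1 + z₀) * ‖z - w‖ ^ 2 := by
    rw [h1, hz, habs, habs]
    field_simp
    ring_nf
    linear_combination (-1) * hz0sq + (-1) * hkh
  have e2 : 1 + ‖z‖ ^ 2 + (2 * k * u + 2 * h * v + z₀ * (1 - ‖z‖ ^ 2))
      = (1 - z₀) * ‖z - wHat‖ ^ 2 := by
    rw [h2, hz, habs, habs]
    field_simp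
    ring_nf
    linear_combination (-1) * hz0sq + (-1) * hkh
  calc (1 + ‖z‖ ^ 2) ^ 2
        - (2 * k * u + 2 * h * v + z₀ * (1 - ‖z‖ ^ 2)) ^ 2
      = (1 + ‖z‖ ^ 2 - (2 * k * u + 2 * h * v + z₀ * (1 - ‖z‖ ^ 2)))
        * (1 + ‖z‖ ^ 2 + (2 * k * u + 2 * h * v + z₀ * (1 - ‖z‖ ^ 2))) := by
        ring
    _ = ((1 + z₀) * ‖z - w‖ ^ 2) * ((1 - z₀) * ‖z - wHat‖ ^ 2) := by
        rw [e1, e2]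
    _ = r ^ 2 * ‖z - w‖ ^ 2 * ‖z - wHat‖ ^ 2 := by
        linear_combination (-(‖z - w‖ ^ 2 * ‖z - wHat‖ ^ 2)) * hz0sq
end

section
/- Fix σ ∈ {+1, −1}, r > 0, z₀ ∈ ℝ with z₀ ≠ ±1, and for j = 1,…,n let k_j, h_j ∈ ℝ with k_j² + h_j² = r², and set w_j = (k_j + i h_j)/(1 + z₀), ŵ_j = −(k_j + i h_j)/(1 − z₀). Define N_j(z) = k_j(z + z̄) − i h_j(z − z̄) + σ z₀ (1 − σ|z|²) and V(z) = Σ_{j=1}^{n} N_j(z)/(r |z − w_j| |z − ŵ_j|) for z ∈ ℂ \ {w_1,…,w_n, ŵ_1,…,ŵ_n}. Fix k ∈ {1,…,n} and assume w_k ≠ w_j for every j ≠ k and w_k ≠ ŵ_j for every j. Then the function F(w) = |w|² · V(w·conj(w) + w_k), defined for all w ≠ 0 in a sufficiently small punctured neighborhood of 0 ∈ ℂ, extends continuously to w = 0 with value F(0) = N_k(w_k)/(r |w_k − ŵ_k|). In particular, the Levi-Civita-type transformation z = w·conj(w) + w_k together with the time rescaling dt/ds = |w|² removes the singularity of the transformed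 Hamiltonian due to collision of the massless particle with the k-th primary. -/
open Real Filter Topology

noncomputable section

/-- Levi-Civita-type local regularization in the restricted curved `(n+1)`-body problem
on `S²` (`σ = +1`) or `H²` (`σ = −1`):  in rotating stereographic coordinates the
potential is `V(z) = Σⱼ Nⱼ(z)/(r |z − wⱼ| |z − ŵⱼ|)`, where
`Nⱼ(z) = kⱼ(z + z̄) − i hⱼ(z − z̄) + σ z₀ (1 − σ|z|²)`, the `wⱼ` are the projected
primaries and the `ŵⱼ` the projected antipodes/auxiliary points.  If `w_K` is distinct
from all other `wⱼ` and from every `ŵⱼ`, then after the transformation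
`z = w·conj(w) + w_K` (with time rescaling `dt/ds = |w|²`) the function
`F(w) = |w|² · V(w·conj(w) + w_K)` extends continuously to `w = 0` with value
`N_K(w_K)/(r |w_K − ŵ_K|)`; i.e. the collision singularity with the `K`-th primary is
removed. -/
theorem leviCivita_local_regularization
    (σ : ℝ) (hσ : σ = 1 ∨ σ = -1) (r z₀ : ℝ) (hr : 0 < r)
    (hz₀1 : z₀ ≠ 1) (hz₀2 : z₀ ≠ -1)
    (n : ℕ) (k h : Fin n → ℝ) (hkh : ∀ j, (k j) ^ 2 + (h j) ^ 2 = r ^ 2)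
    (w wHat : Fin n → ℂ)
    (hw : ∀ j, w j = ((k j : ℂ) + (h j : ℂ) * Complex.I) / (1 + (z₀ : ℂ)))
    (hwHat : ∀ j, wHat j = -((k j : ℂ) + (h j : ℂ) * Complex.I) / (1 - (z₀ : ℂ)))
    (N : Fin n → ℂ → ℂ)
    (hN : ∀ j z, N j z =
      (k j : ℂ) * (z + (starRingEnd ℂ) z) - Complex.I * (h j : ℂ) * (z - (starRingEnd ℂ) z)
        + (σ : ℂ) * (z₀ : ℂ) * (1 - (σ : ℂ) * ((‖z‖ : ℝ) : ℂ) ^ 2))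
    (V : ℂ → ℂ)
    (hV : ∀ z, V z = ∑ j, N j z /
      ((r * ‖z - w j‖ * ‖z - wHat j‖ : ℝ) : ℂ))
    (K : Fin n) (hKw : ∀ j, j ≠ K → w K ≠ w j) (hKwHat : ∀ j, w K ≠ wHat j) :
    Filter.Tendsto
      (fun ww : ℂ => ((‖ww‖ ^ 2 : ℝ) : ℂ) * V (ww * (starRingEnd ℂ) ww + w K))
      (nhdsWithin 0 {(0 : ℂ)}ᶜ)
      (nhds (N K (w K) / ((r * ‖w K - wHat K‖ : ℝ) : ℂ))) := by

  classical
  set z : ℂ → ℂ := fun ww => ww * (starRingEnd ℂ) ww + w K with hzdef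
  have hzc : Continuous z := by
    apply Continuous.add
    · exact continuous_id.mul (Complex.continuous_conj)
    · exact continuous_const
  have hz0 : z 0 = w K := by simp [hzdef]
  have hNc : ∀ j, Continuous (fun ww : ℂ => N j (z ww)) := by
    intro j
    simp only [hN]
    apply Continuous.add
    · apply Continuous.sub
      · exact continuous_const.mul (hzc.add (Complex.continuous_conj.comp hzc))
      · exact continuous_const.mul (hzc.sub (Complex.continuous_conj.comp hzc))
    · apply Continuous.mul continuous_const
      apply Continuous.sub continuous_const
      apply Continuous.mul continuous_const
      exact (Complex.continuous_ofReal.comp (continuous_norm.comp hzc)).pow 2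
  have hstep : ∀ ww : ℂ,
      ((‖ww‖ ^ 2 : ℝ) : ℂ) * V (z ww)
      = ∑ j, ((‖ww‖ ^ 2 : ℝ) : ℂ) *
          (N j (z ww) /
            ((r * ‖z ww - w j‖ * ‖z ww - wHat j‖ : ℝ) : ℂ)) := by
    intro ww; rw [hV, Finset.mul_sum]
  have hT : N K (w K) / ((r * ‖w K - wHat K‖ : ℝ) : ℂ)
      = ∑ j : Fin n, (if j = K then
          N K (w K) / ((r * ‖w K - wHat K‖ : ℝ) : ℂ) else 0) := by
    rw [Finset.sum_ite_eq' Finset.univ K]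
    simp
  rw [show (fun ww : ℂ => ((‖ww‖ ^ 2 : ℝ) : ℂ) * V (ww * (starRingEnd ℂ) ww + w K)) = fun ww => ((‖ww‖ ^ 2 : ℝ) : ℂ) * V (z ww) from rfl]
  simp only [hstep]
  rw [hT]
  refine tendsto_finset_sum _ fun j _ => ?_
  by_cases hj : j = K
  · subst hj
    simp only [if_pos rfl]
    have hd0 : ((r : ℂ) * (‖w j - wHat j‖ : ℂ)) ≠ 0 := by
      apply mul_ne_zero
      · exact_mod_cast hr.ne'
      · exact_mod_cast (norm_ne_zero_iff.mpr (sub_ne_zero.mpr (hKwHat j)))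
    have hg : Filter.Tendsto
        (fun ww : ℂ => N j (z ww) / ((r : ℂ) * (‖z ww - wHat j‖ : ℂ)))
        (nhdsWithin 0 {(0 : ℂ)}ᶜ)
        (nhds (N j (w j) / ((r * ‖w j - wHat j‖ : ℝ) : ℂ))) := by
      have hcont : ContinuousAt
          (fun ww : ℂ => N j (z ww) / ((r : ℂ) * (‖z ww - wHat j‖ : ℂ))) 0 := by
        apply ContinuousAt.div
        · exact (hNc j).continuousAt
        · exact ((continuous_const.mul ((Complex.continuous_ofReal.comp
            (continuous_norm.comp (hzc.sub continuous_const))))).continuousAt)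
        · simpa [hz0] using hd0
      have := hcont.tendsto
      rw [hz0] at this
      simp only [Complex.ofReal_mul] at this ⊢
      exact this.mono_left nhdsWithin_le_nhds
    refine Tendsto.congr' ?_ hg
    filter_upwards [self_mem_nhdsWithin] with ww hww
    have hww' : ww ≠ 0 := hww
    have habs : ‖z ww - w j‖ = ‖ww‖ ^ 2 := by
      simp only [hzdef, add_sub_cancel_right, norm_mul, Complex.norm_conj, sq]
    have hc : ((‖ww‖ ^ 2 : ℝ) : ℂ) ≠ 0 := by
      exact_mod_cast pow_ne_zero 2 (norm_ne_zero_iff.mpr hww')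
    rw [habs]
    push_cast
    rw [mul_div_assoc']
    rw [show (r : ℂ) * ((‖ww‖ : ℂ) ^ 2) * (‖z ww - wHat j‖ : ℂ)
        = ((‖ww‖ : ℂ) ^ 2) * ((r : ℂ) * (‖z ww - wHat j‖ : ℂ)) by ring]
    rw [show ((‖ww‖ : ℂ) ^ 2) * N j (z ww)
        = ((‖ww‖ : ℂ) ^ 2) * N j (z ww) from rfl]
    exact (mul_div_mul_left (N j (z ww)) _ (by exact_mod_cast hc)).symm
  · simp only [if_neg hj]
    have hcont : ContinuousAt
        (fun ww : ℂ => ((‖ww‖ ^ 2 : ℝ) : ℂ) *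
          (N j (z ww) /
            ((r * ‖z ww - w j‖ * ‖z ww - wHat j‖ : ℝ) : ℂ))) 0 := by
      apply ContinuousAt.mul
      · exact ((Complex.continuous_ofReal.comp (continuous_norm.pow 2)).continuousAt)
      · apply ContinuousAt.div
        · exact (hNc j).continuousAt
        · apply Continuous.continuousAt
          apply Complex.continuous_ofReal.comp
          apply Continuous.mul
          · exact continuous_const.mul (continuous_norm.comp (hzc.sub continuous_const))
          · exact continuous_norm.comp (hzc.sub continuous_const)
        · simp only [hz0]
          have h1 : ‖w K - w j‖ ≠ 0 :=
            norm_ne_zero_iff.mpr (sub_ne_zero.mpr (hKw j hj))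
          have h2 : ‖w K - wHat j‖ ≠ 0 :=
            norm_ne_zero_iff.mpr (sub_ne_zero.mpr (hKwHat j))
          simp only [ne_eq, Complex.ofReal_eq_zero]
          positivity
    have := hcont.tendsto
    simp only [hz0, map_zero] at this
    norm_num at this
    refine (this.mono_left nhdsWithin_le_nhds).congr fun x => ?_
    push_cast
    ring
end
end

section
/- Fix σ ∈ {+1, −1}, r > 0, z₀ ∈ ℝ with z₀ ≠ ±1, n ≥ 2, and w_1 ∈ ℂ \ {0}. For j = 1,…,n let k_j = Re((1+z₀) w_j), h_j = Im((1+z₀) w_j) where w_j = w_1 e^{2πi(j−1)/n} (so k_j² + h_j² = r² with r = (1+z₀)|w_1|, assumed positive), and set ŵ_j = −(k_j + i h_j)/(1 − z₀). Assume ŵ_j ≠ w_i for all i, j. Define N_j(z) = k_j(z + z̄) − i h_j(z − z̄) + σ z₀ (1 − σ|z|²), V(z) = Σ_{j=1}^{n} N_j(z)/(r |z − w_j| |z − ŵ_j|), and g(w) = ((n−1)/n) w + w_1^n/(n w^{n−1}) for w ≠ 0. Then for each i ∈ {1,…,n} the function w ↦ |g'(w)|² · V(g(w)), defined on a punctured neighborhood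 of w_i, extends continuously to w = w_i; i.e., the Birkhoff-type transformation z = g(w), together with the time rescaling dt/ds = |g'(w)|², simultaneously removes all n binary-collision singularities between the massless particle and the primaries, the only remaining singularity of the transformed potential being at w = 0 (which corresponds to |z| → ∞). -/
open Real Filter Topology

noncomputable section

/-- Birkhoff-type global regularization in the restricted curved `(n+1)`-body problem on
`S²` (`σ = +1`) or `H²` (`σ = −1`):  the `n` primaries occupy the vertices
`wⱼ = w₁ e^{2πi(j−1)/n}` of a regular `n`-gon (indexed here by `j = 0,…,n−1`), the
projections of the points `(kⱼ, hⱼ, z₀)` of the sphere/hyperboloid, with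
`kⱼ = Re((1+z₀)wⱼ)`, `hⱼ = Im((1+z₀)wⱼ)`, `r = (1+z₀)|w₁| > 0`, and with auxiliary
points `ŵⱼ = −(kⱼ + i hⱼ)/(1 − z₀)` assumed distinct from all primaries.  The potential
is `V(z) = Σⱼ Nⱼ(z)/(r |z − wⱼ| |z − ŵⱼ|)` with
`Nⱼ(z) = kⱼ(z + z̄) − i hⱼ(z − z̄) + σ z₀ (1 − σ|z|²)`.  Then, with the transformation
`z = g(w) = ((n−1)/n) w + w₁ⁿ/(n w^{n−1})` and the time rescaling `dt/ds = |g'(w)|²`,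
for every `i` the function `w ↦ |g'(w)|² V(g(w))` extends continuously to `w = wᵢ`, i.e.
all `n` binary-collision singularities are removed simultaneously. -/
theorem birkhoff_global_regularization
    (σ : ℝ) (hσ : σ = 1 ∨ σ = -1) (z₀ : ℝ) (hz₀1 : z₀ ≠ 1) (hz₀2 : z₀ ≠ -1)
    (n : ℕ) (hn : 2 ≤ n) (w₁ : ℂ) (hw₁ : w₁ ≠ 0)
    (w : Fin n → ℂ)
    (hw : ∀ j : Fin n, w j = w₁ * Complex.exp (2 * (π : ℂ) * Complex.I * ((j : ℕ) : ℂ) / (n : ℂ)))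
    (k h : Fin n → ℝ)
    (hk : ∀ j, k j = (((1 + z₀ : ℝ) : ℂ) * w j).re)
    (hh : ∀ j, h j = (((1 + z₀ : ℝ) : ℂ) * w j).im)
    (r : ℝ) (hr : r = (1 + z₀) * ‖w₁‖) (hrpos : 0 < r)
    (wHat : Fin n → ℂ)
    (hwHat : ∀ j, wHat j = -((k j : ℂ) + (h j : ℂ) * Complex.I) / (1 - (z₀ : ℂ)))
    (hsep : ∀ i j : Fin n, wHat j ≠ w i)
    (N : Fin n → ℂ → ℂ)
    (hN : ∀ j z, N j z =
      (k j : ℂ) * (z + (starRingEnd ℂ) z) - Complex.I * (h j : ℂ) * (z - (starRingEnd ℂ) z)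
        + (σ : ℂ) * (z₀ : ℂ) * (1 - (σ : ℂ) * ((‖z‖ : ℝ) : ℂ) ^ 2))
    (V : ℂ → ℂ)
    (hV : ∀ z, V z = ∑ j, N j z /
      ((r * ‖z - w j‖ * ‖z - wHat j‖ : ℝ) : ℂ))
    (g g' : ℂ → ℂ)
    (hg : ∀ x : ℂ, g x = (((n : ℂ) - 1) / (n : ℂ)) * x + w₁ ^ n / ((n : ℂ) * x ^ (n - 1)))
    (hg' : ∀ x : ℂ, g' x = (((n : ℂ) - 1) / (n : ℂ)) - ((n : ℂ) - 1) * w₁ ^ n / ((n : ℂ) * x ^ n))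
    (i : Fin n) :
    ∃ L : ℂ, Filter.Tendsto
      (fun x : ℂ => ((‖g' x‖ ^ 2 : ℝ) : ℂ) * V (g x))
      (nhdsWithin (w i) {w i}ᶜ) (nhds L) := by
  obtain ⟨m, rfl⟩ : ∃ m, n = m + 2 := ⟨n - 2, by omega⟩
  have hm2 : ((m+2:ℕ) : ℂ) = (m : ℂ) + 2 := by push_cast; ring
  have hn0 : ((m:ℂ)+2) ≠ 0 := by
    have : ((m+2:ℕ) : ℂ) ≠ 0 := Nat.cast_ne_zero.2 (by omega)
    rwa [hm2] at this
  have ha0 : w i ≠ 0 := by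
    rw [hw]; exact mul_ne_zero hw₁ (Complex.exp_ne_zero _)
  have han : (w i) ^ (m+2) = w₁ ^ (m+2) := by
    have hnC : ((m+2:ℕ) : ℂ) ≠ 0 := Nat.cast_ne_zero.2 (by omega)
    rw [hw, mul_pow]
    have h1 : Complex.exp (2 * (π : ℂ) * Complex.I * ((i:ℕ) : ℂ) / ((m+2:ℕ) : ℂ)) ^ (m+2)
        = Complex.exp (((m+2:ℕ) : ℂ) * (2 * (π : ℂ) * Complex.I * ((i:ℕ) : ℂ) / ((m+2:ℕ) : ℂ))) :=
      (Complex.exp_nat_mul _ (m+2)).symm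
    rw [h1]
    have h2 : ((m+2:ℕ) : ℂ) * (2 * (π : ℂ) * Complex.I * ((i:ℕ) : ℂ) / ((m+2:ℕ) : ℂ))
        = (((i:ℕ) : ℤ) : ℂ) * (2 * (π : ℂ) * Complex.I) := by
      push_cast
      field_simp
    rw [h2, Complex.exp_int_mul_two_pi_mul_I, mul_one]
  -- the auxiliary polynomials
  set s : ℂ → ℂ := fun x => ∑ k ∈ Finset.range (m+2), x ^ k * (w i) ^ (m + 1 - k) with hs_def
  set q : ℂ → ℂ := fun x => ∑ j ∈ Finset.range (m+1), x ^ j *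
      (∑ l ∈ Finset.range (m+1-j), x ^ l * (w i) ^ (m+1-j-1-l)) with hq_def
  have hsq : ∀ x : ℂ, (x - w i) * s x = x ^ (m+2) - (w i) ^ (m+2) := by
    intro x
    rw [mul_comm]
    exact geom_sum₂_mul x (w i) (m+2)
  have hq1 : ∀ x : ℂ, q x * (x - w i) = ((m:ℂ)+2) * x ^ (m+1) - s x := by
    intro x
    have h1 : q x * (x - w i) = ∑ j ∈ Finset.range (m+1),
        (x ^ (m+1) - x ^ j * (w i) ^ (m+1-j)) := by
      rw [hq_def]
      simp only [Finset.sum_mul]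
      refine Finset.sum_congr rfl fun j hj => ?_
      rw [Finset.mem_range] at hj
      rw [mul_assoc, geom_sum₂_mul, mul_sub, ← pow_add]
      have : j + (m + 1 - j) = m + 1 := by omega
      rw [this]
    have h2 : s x = (∑ j ∈ Finset.range (m+1), x ^ j * (w i) ^ (m+1-j)) + x ^ (m+1) := by
      rw [hs_def]
      simp only
      rw [Finset.sum_range_succ]
      have h0 : m + 1 - (m+1) = 0 := by omega
      rw [h0, pow_zero, mul_one]
    rw [h1, Finset.sum_sub_distrib, Finset.sum_const, Finset.card_range, h2]
    generalize (∑ j ∈ Finset.range (m+1), x ^ j * (w i) ^ (m+1-j)) = S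
    push_cast
    ring
  have hqa : q (w i) ≠ 0 := by
    have hqav : q (w i) = ((∑ j ∈ Finset.range (m+1), (m+1-j) : ℕ) : ℂ) * (w i) ^ m := by
      rw [hq_def]
      simp only
      push_cast
      rw [Finset.sum_mul]
      refine Finset.sum_congr rfl fun j hj => ?_
      rw [Finset.mem_range] at hj
      have hinner : (∑ l ∈ Finset.range (m+1-j), (w i) ^ l * (w i) ^ (m+1-j-1-l))
          = ((m+1-j : ℕ) : ℂ) * (w i) ^ (m - j) := by
        rw [Finset.sum_congr rfl (fun l hl => ?_), Finset.sum_const, Finset.card_range,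
          nsmul_eq_mul]
        rw [Finset.mem_range] at hl
        rw [← pow_add]
        congr 1
        omega
      rw [hinner, ← mul_assoc, mul_comm ((w i) ^ j), mul_assoc, ← pow_add]
      congr 2
      omega
    rw [hqav]
    refine mul_ne_zero (Nat.cast_ne_zero.2 ?_) (pow_ne_zero _ ha0)
    have : m + 1 - 0 ≤ ∑ j ∈ Finset.range (m+1), (m+1-j) :=
      Finset.single_le_sum (fun j _ => Nat.zero_le _) (Finset.mem_range.2 (by omega))
    omega
  -- the regularizing factor
  set φ : ℂ → ℂ := fun x => (((m:ℂ)+1)^2 * s x ^ 2) / (((m:ℂ)+2) * x ^ (m+3) * q x) with hφ_def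
  have hpoly : ∀ x : ℂ, (x - w i)^2 * q x
      = ((m:ℂ)+2) * x^(m+2) - ((m:ℂ)+2) * (w i) * x^(m+1) - x^(m+2) + (w i)^(m+2) := by
    intro x
    calc (x - w i)^2 * q x = (x - w i) * (q x * (x - w i)) := by ring
    _ = (x - w i) * (((m:ℂ)+2) * x^(m+1) - s x) := by rw [hq1]
    _ = ((m:ℂ)+2) * x^(m+1) * (x - w i) - (x - w i) * s x := by ring
    _ = ((m:ℂ)+2) * x^(m+1) * (x - w i) - (x^(m+2) - (w i)^(m+2)) := by rw [hsq]
    _ = _ := by ring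
  have hga : g (w i) = w i := by
    rw [hg, ← han, hm2, show m+2-1 = m+1 from rfl]
    have hp : (w i) ^ (m+1) ≠ 0 := pow_ne_zero _ ha0
    field_simp
    ring
  have hgx : ∀ x : ℂ, x ≠ 0 → g x - w i = (x - w i)^2 * q x / (((m:ℂ)+2) * x ^ (m+1)) := by
    intro x hx
    rw [hpoly x, hg, ← han, hm2, show m+2-1 = m+1 from rfl]
    have hp : (x : ℂ) ^ (m+1) ≠ 0 := pow_ne_zero _ hx
    field_simp
    ring
  have hg's : ∀ x : ℂ, x ≠ 0 →
      g' x = ((m:ℂ)+1) * ((x - w i) * s x) / (((m:ℂ)+2) * x ^ (m+2)) := by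
    intro x hx
    rw [hsq x, hg', ← han, hm2]
    have hp : (x : ℂ) ^ (m+2) ≠ 0 := pow_ne_zero _ hx
    field_simp
    ring
  have hkey : ∀ x : ℂ, x ≠ 0 → q x ≠ 0 → g' x ^ 2 = φ x * (g x - w i) := by
    intro x hx hq
    have h1 : g x - w i = (x - w i)^2 * q x / (((m:ℂ)+2) * x ^ (m+1)) := hgx x hx
    rw [hg's x hx, hφ_def, h1]
    have hp2 : (x : ℂ) ^ (m+2) ≠ 0 := pow_ne_zero _ hx
    have hp3 : (x : ℂ) ^ (m+3) ≠ 0 := pow_ne_zero _ hx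
    have hp1 : (x : ℂ) ^ (m+1) ≠ 0 := pow_ne_zero _ hx
    field_simp
    ring
  -- continuity facts
  have hcs : Continuous s := by
    rw [hs_def]
    exact continuous_finset_sum _ fun k _ => by fun_prop
  have hcq : Continuous q := by
    rw [hq_def]
    exact continuous_finset_sum _ fun j _ => Continuous.mul (by fun_prop)
      (continuous_finset_sum _ fun l _ => by fun_prop)
  have hcg : ContinuousAt g (w i) := by
    have hgfun : g = fun x => ((((m+2:ℕ):ℂ) - 1) / ((m+2:ℕ):ℂ)) * x
        + w₁ ^ (m+2) / (((m+2:ℕ):ℂ) * x ^ (m+2-1)) := funext hg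
    rw [hgfun]
    refine ContinuousAt.add (by fun_prop) (ContinuousAt.div continuousAt_const (by fun_prop) ?_)
    exact mul_ne_zero (Nat.cast_ne_zero.2 (by omega)) (pow_ne_zero _ ha0)
  have hcg' : ContinuousAt g' (w i) := by
    have hgfun : g' = fun x => ((((m+2:ℕ):ℂ) - 1) / ((m+2:ℕ):ℂ))
        - (((m+2:ℕ):ℂ) - 1) * w₁ ^ (m+2) / (((m+2:ℕ):ℂ) * x ^ (m+2)) := funext hg'
    rw [hgfun]
    refine ContinuousAt.sub continuousAt_const
      (ContinuousAt.div continuousAt_const (by fun_prop) ?_)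
    exact mul_ne_zero (Nat.cast_ne_zero.2 (by omega)) (pow_ne_zero _ ha0)
  have hcφ : ContinuousAt φ (w i) := by
    rw [hφ_def]
    refine ContinuousAt.div (by fun_prop) ?_ ?_
    · exact ContinuousAt.mul (by fun_prop) hcq.continuousAt
    · exact mul_ne_zero (mul_ne_zero hn0 (pow_ne_zero _ ha0)) hqa
  have hcN : ∀ j, Continuous (N j) := by
    intro j
    have h1 : Continuous (starRingEnd ℂ) := Complex.continuous_conj
    have h2 : Continuous fun z : ℂ => ((‖z‖ : ℝ) : ℂ) :=
      Complex.continuous_ofReal.comp continuous_norm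
    have hfun : N j = fun z => (k j : ℂ) * (z + (starRingEnd ℂ) z)
        - Complex.I * (h j : ℂ) * (z - (starRingEnd ℂ) z)
        + (σ : ℂ) * (z₀ : ℂ) * (1 - (σ : ℂ) * ((‖z‖ : ℝ) : ℂ) ^ 2) := funext (hN j)
    rw [hfun]
    fun_prop
  -- eventual facts on the punctured neighborhood
  have e1 : ∀ᶠ x in nhdsWithin (w i) {w i}ᶜ, x ≠ w i := by
    filter_upwards [eventually_mem_nhdsWithin] with x hx using hx
  have e2 : ∀ᶠ x in nhdsWithin (w i) {w i}ᶜ, x ≠ 0 :=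
    Filter.Eventually.filter_mono nhdsWithin_le_nhds (eventually_ne_nhds ha0)
  have e3 : ∀ᶠ x in nhdsWithin (w i) {w i}ᶜ, q x ≠ 0 :=
    Filter.Eventually.filter_mono nhdsWithin_le_nhds
      (hcq.continuousAt.eventually_ne hqa)
  have e4 : ∀ᶠ x in nhdsWithin (w i) {w i}ᶜ, g x ≠ w i := by
    filter_upwards [e1, e2, e3] with x h1 h2 h3
    have hne : g x - w i ≠ 0 := by
      rw [hgx x h2]
      exact div_ne_zero (mul_ne_zero (pow_ne_zero 2 (sub_ne_zero.2 h1)) h3)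
        (mul_ne_zero hn0 (pow_ne_zero _ h2))
    exact sub_ne_zero.1 hne
  -- per-term limits
  have hterm : ∀ j : Fin (m+2), ∃ Lj : ℂ, Filter.Tendsto
      (fun x : ℂ => ((‖g' x‖ ^ 2 : ℝ) : ℂ) * (N j (g x) /
        ((r * ‖g x - w j‖ * ‖g x - wHat j‖ : ℝ) : ℂ)))
      (nhdsWithin (w i) {w i}ᶜ) (nhds Lj) := by
    intro j
    have hwias : w i ≠ wHat j := (hsep i j).symm
    have e5 : ∀ᶠ x in nhdsWithin (w i) {w i}ᶜ, g x ≠ wHat j :=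
      Filter.Eventually.filter_mono nhdsWithin_le_nhds
        (hcg.eventually_ne (by rw [hga]; exact hwias))
    have cNg : ContinuousAt (fun x => N j (g x)) (w i) := ((hcN j).continuousAt).comp hcg
    by_cases hj : w j = w i
    · -- collision term: use the key identity
      refine ⟨((‖φ (w i)‖ : ℝ) : ℂ) * (N j (g (w i)) /
        ((r * ‖g (w i) - wHat j‖ : ℝ) : ℂ)), ?_⟩
      have hE : Filter.Tendsto (fun x : ℂ => ((‖φ x‖ : ℝ) : ℂ) * (N j (g x) /
          ((r * ‖g x - wHat j‖ : ℝ) : ℂ))) (nhdsWithin (w i) {w i}ᶜ)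
          (nhds (((‖φ (w i)‖ : ℝ) : ℂ) * (N j (g (w i)) /
          ((r * ‖g (w i) - wHat j‖ : ℝ) : ℂ)))) := by
        refine Filter.Tendsto.mono_left (ContinuousAt.tendsto ?_) nhdsWithin_le_nhds
        refine ContinuousAt.mul ?_ (ContinuousAt.div cNg ?_ ?_)
        · exact Complex.continuous_ofReal.continuousAt.comp
            (continuous_norm.continuousAt.comp hcφ)
        · exact Complex.continuous_ofReal.continuousAt.comp
            (ContinuousAt.mul continuousAt_const
              (continuous_norm.continuousAt.comp (hcg.sub continuousAt_const)))
        · rw [hga]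
          exact Complex.ofReal_ne_zero.2
            (ne_of_gt (mul_pos hrpos (norm_pos_iff.2 (sub_ne_zero.2 hwias))))
      refine Filter.Tendsto.congr' ?_ hE
      filter_upwards [e1, e2, e3, e4, e5] with x hx1 hx2 hx3 hx4 hx5
      have habs : (‖g' x‖)^2 = ‖φ x‖ * ‖g x - w i‖ := by
        rw [← norm_pow, hkey x hx2 hx3, norm_mul]
      rw [hj, habs]
      have hb : ‖g x - w i‖ ≠ 0 :=
        norm_ne_zero_iff.2 (sub_ne_zero.2 hx4)
      have hd : ‖g x - wHat j‖ ≠ 0 :=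
        norm_ne_zero_iff.2 (sub_ne_zero.2 hx5)
      have hrne : r ≠ 0 := ne_of_gt hrpos
      generalize ‖φ x‖ = A
      generalize hB : ‖g x - w i‖ = B at hb ⊢
      generalize hD : ‖g x - wHat j‖ = D at hd ⊢
      generalize N j (g x) = C
      have hBC : ((B : ℝ) : ℂ) ≠ 0 := Complex.ofReal_ne_zero.2 hb
      have hDC : ((D : ℝ) : ℂ) ≠ 0 := Complex.ofReal_ne_zero.2 hd
      have hRC : ((r : ℝ) : ℂ) ≠ 0 := Complex.ofReal_ne_zero.2 hrne
      push_cast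
      field_simp
    · -- regular term: plain continuity
      refine ⟨((‖g' (w i)‖ ^ 2 : ℝ) : ℂ) * (N j (g (w i)) /
        ((r * ‖g (w i) - w j‖ * ‖g (w i) - wHat j‖ : ℝ) : ℂ)), ?_⟩
      refine Filter.Tendsto.mono_left (ContinuousAt.tendsto ?_) nhdsWithin_le_nhds
      refine ContinuousAt.mul ?_ (ContinuousAt.div cNg ?_ ?_)
      · exact Complex.continuous_ofReal.continuousAt.comp
          ((continuous_pow 2).continuousAt.comp (continuous_norm.continuousAt.comp hcg'))
      · exact Complex.continuous_ofReal.continuousAt.comp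
          (ContinuousAt.mul
            (ContinuousAt.mul continuousAt_const
              (continuous_norm.continuousAt.comp (hcg.sub continuousAt_const)))
            (continuous_norm.continuousAt.comp (hcg.sub continuousAt_const)))
      · rw [hga]
        refine Complex.ofReal_ne_zero.2 (ne_of_gt (mul_pos (mul_pos hrpos ?_) ?_))
        · exact norm_pos_iff.2 (sub_ne_zero.2 (Ne.symm hj))
        · exact norm_pos_iff.2 (sub_ne_zero.2 (hsep i j).symm)
  choose L hL using hterm
  refine ⟨∑ j, L j, ?_⟩
  have hsum := tendsto_finset_sum Finset.univ (fun j _ => hL j)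
  refine Filter.Tendsto.congr (fun x => ?_) hsum
  rw [hV, Finset.mul_sum]
end
end
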